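/- arXiv:2305.00684 — 3 statements merged into one kernel-verified Lean document; each statement's English description precedes it below -/
import Mathlib

section
/- Let d, T be positive integers, let η > 0, and let f^1, …, f^T ∈ ℝ^d be an arbitrary sequence of vectors. Let q^1 ∈ Δ^d be the uniform distribution on [d] and define the exponential-weights iterates by q^{t+1}(i) = q^t(i)·exp(η f^t(i)) / Σ_{j=1}^d q^t(j)·exp(η f^t(j)) for t = 1, …, T. Then for every q ∈ Δ^d: Σ_{t=1}^T ⟨q, f^t⟩ ≤ Σ_{t=1}^T ⟨q^{t+1}, f^t⟩ − (1/η) Σ_{t=1}^T KL(q^{t+1} ‖ q^t) + (1/η) KL(q ‖ q^1). -/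
open Finset

/-- Kullback–Leibler divergence between two finitely supported probability vectors,
with the convention `0 * log (0/q) = 0` (automatic since `Real.log 0 = 0`). -/
noncomputable def KLdiv {d : ℕ} (p q : Fin d → ℝ) : ℝ :=
  ∑ i, p i * Real.log (p i / q i)

/-- Lemma on exponential weights with negative-KL terms:
for exponential-weights iterates `q^1, …, q^{T+1}` started at the uniform
distribution with step size `η` on reward vectors `f^1, …, f^T`, every
comparator `p ∈ Δ^d` satisfies
`Σ_t ⟨p, f^t⟩ ≤ Σ_t ⟨q^{t+1}, f^t⟩ − (1/η) Σ_t KL(q^{t+1} ‖ q^t) + (1/η) KL(p ‖ q^1)`. -/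
theorem exp_weights_negKL_regret (d T : ℕ) (hd : 0 < d) (hT : 0 < T)
    (η : ℝ) (hη : 0 < η) (f : Fin T → Fin d → ℝ)
    (q : Fin (T + 1) → Fin d → ℝ)
    (hq0 : ∀ i, q 0 i = 1 / d)
    (hstep : ∀ (t : Fin T) (i : Fin d),
      q t.succ i = q t.castSucc i * Real.exp (η * f t i) /
        ∑ j, q t.castSucc j * Real.exp (η * f t j))
    (p : Fin d → ℝ) (hp : p ∈ stdSimplex ℝ (Fin d)) :
    ∑ t : Fin T, ∑ i, p i * f t i ≤
      (∑ t : Fin T, ∑ i, q t.succ i * f t i)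
        - (1 / η) * ∑ t : Fin T, KLdiv (q t.succ) (q t.castSucc)
        + (1 / η) * KLdiv p (q 0) := by
  haveI : Nonempty (Fin d) := ⟨⟨0, hd⟩⟩
  have hd' : (0:ℝ) < d := by exact_mod_cast hd
  -- positivity of all iterates
  have hpos : ∀ t : Fin (T+1), ∀ i, 0 < q t i := by
    intro t
    induction t using Fin.induction with
    | zero => intro i; rw [hq0]; positivity
    | succ t ih =>
      intro i
      rw [hstep]
      have hZ : 0 < ∑ j, q t.castSucc j * Real.exp (η * f t j) :=
        Finset.sum_pos (fun j _ => mul_pos (ih j) (Real.exp_pos _)) Finset.univ_nonempty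
      exact div_pos (mul_pos (ih i) (Real.exp_pos _)) hZ
  -- iterates sum to 1
  have hsum : ∀ t : Fin (T+1), ∑ i, q t i = 1 := by
    intro t
    induction t using Fin.induction with
    | zero =>
      simp only [hq0, Finset.sum_const, Finset.card_univ, Fintype.card_fin, nsmul_eq_mul]
      field_simp
    | succ t ih =>
      have hZ : 0 < ∑ j, q t.castSucc j * Real.exp (η * f t j) :=
        Finset.sum_pos (fun j _ => mul_pos (hpos _ j) (Real.exp_pos _)) Finset.univ_nonempty
      simp only [hstep]
      rw [← Finset.sum_div, div_self hZ.ne']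
  -- the key per-step identity
  have key : ∀ t : Fin T,
      ∑ i, p i * f t i
        = (∑ i, q t.succ i * f t i)
          - (1/η) * KLdiv (q t.succ) (q t.castSucc)
          + (1/η) * (KLdiv p (q t.castSucc) - KLdiv p (q t.succ)) := by
    intro t
    set Z := ∑ j, q t.castSucc j * Real.exp (η * f t j) with hZdef
    have hZ : 0 < Z :=
      Finset.sum_pos (fun j _ => mul_pos (hpos _ j) (Real.exp_pos _)) Finset.univ_nonempty
    have hlog : ∀ i, Real.log (q t.succ i) =
        Real.log (q t.castSucc i) + η * f t i - Real.log Z := by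
      intro i
      rw [hstep, ← hZdef, Real.log_div (mul_pos (hpos _ i) (Real.exp_pos _)).ne' hZ.ne',
        Real.log_mul (hpos _ i).ne' (Real.exp_pos _).ne', Real.log_exp]
    have hA : KLdiv p (q t.castSucc) - KLdiv p (q t.succ)
        = ∑ i, p i * (η * f t i - Real.log Z) := by
      unfold KLdiv
      rw [← Finset.sum_sub_distrib]
      refine Finset.sum_congr rfl fun i _ => ?_
      rcases eq_or_lt_of_le (hp.1 i) with h0 | h0
      · simp [← h0]
      · rw [Real.log_div h0.ne' (hpos t.castSucc i).ne',
          Real.log_div h0.ne' (hpos t.succ i).ne', hlog]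
        ring
    have hB : KLdiv (q t.succ) (q t.castSucc)
        = ∑ i, q t.succ i * (η * f t i - Real.log Z) := by
      unfold KLdiv
      refine Finset.sum_congr rfl fun i _ => ?_
      rw [Real.log_div (hpos t.succ i).ne' (hpos t.castSucc i).ne', hlog]
      ring
    have expand : ∀ w : Fin d → ℝ, (∑ i, w i = 1) →
        ∑ i, w i * (η * f t i - Real.log Z)
          = η * (∑ i, w i * f t i) - Real.log Z := by
      intro w hw
      calc ∑ i, w i * (η * f t i - Real.log Z)
          = ∑ i, (η * (w i * f t i) - w i * Real.log Z) :=
            Finset.sum_congr rfl fun i _ => by ring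
        _ = η * (∑ i, w i * f t i) - (∑ i, w i) * Real.log Z := by
            rw [Finset.sum_sub_distrib, Finset.mul_sum, Finset.sum_mul]
        _ = η * (∑ i, w i * f t i) - Real.log Z := by rw [hw]; ring
    have hηne : η ≠ 0 := hη.ne'
    have hAe : KLdiv p (q t.castSucc) - KLdiv p (q t.succ)
        = η * (∑ i, p i * f t i) - Real.log Z := by rw [hA, expand p hp.2]
    have hBe : KLdiv (q t.succ) (q t.castSucc)
        = η * (∑ i, q t.succ i * f t i) - Real.log Z := by
      rw [hB, expand (q t.succ) (hsum t.succ)]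
    rw [hAe, hBe]
    field_simp
    ring
  -- cast lemmas for telescoping
  open Fin.NatCast in
  have hc : ∀ t : Fin T, (((t : ℕ)) : Fin (T+1)) = t.castSucc := by
    intro t
    ext
    simp [Fin.val_natCast, Nat.mod_eq_of_lt (by omega : (t:ℕ) < T+1)]
  open Fin.NatCast in
  have hs : ∀ t : Fin T, ((((t : ℕ) + 1 : ℕ)) : Fin (T+1)) = t.succ := by
    intro t
    ext
    simp [Fin.val_natCast, Nat.mod_eq_of_lt (by omega : (t:ℕ) + 1 < T+1)]
  open Fin.NatCast in
  have tele : ∑ t : Fin T, (KLdiv p (q t.castSucc) - KLdiv p (q t.succ))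
      = KLdiv p (q 0) - KLdiv p (q (Fin.last T)) := by
    calc ∑ t : Fin T, (KLdiv p (q t.castSucc) - KLdiv p (q t.succ))
        = ∑ t : Fin T, (KLdiv p (q (((t:ℕ)) : Fin (T+1)))
            - KLdiv p (q ((((t:ℕ)+1 : ℕ)) : Fin (T+1)))) :=
          Finset.sum_congr rfl fun t _ => by rw [hc t, hs t]
      _ = ∑ n ∈ Finset.range T, (KLdiv p (q ((n : ℕ) : Fin (T+1)))
            - KLdiv p (q (((n:ℕ)+1 : ℕ) : Fin (T+1)))) :=
          Fin.sum_univ_eq_sum_range (fun n => KLdiv p (q ((n : ℕ) : Fin (T+1)))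
            - KLdiv p (q (((n:ℕ)+1 : ℕ) : Fin (T+1)))) T
      _ = -∑ n ∈ Finset.range T, (KLdiv p (q (((n:ℕ)+1 : ℕ) : Fin (T+1)))
            - KLdiv p (q ((n : ℕ) : Fin (T+1)))) := by
          rw [← Finset.sum_neg_distrib]
          exact Finset.sum_congr rfl fun n _ => by ring
      _ = -(KLdiv p (q ((T : ℕ) : Fin (T+1))) - KLdiv p (q ((0 : ℕ) : Fin (T+1)))) := by
          rw [Finset.sum_range_sub (fun n => KLdiv p (q ((n : ℕ) : Fin (T+1))))]
      _ = KLdiv p (q 0) - KLdiv p (q (Fin.last T)) := by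
          have h1 : ((T : ℕ) : Fin (T+1)) = Fin.last T := by
            ext; simp [Fin.val_natCast]
          have h2 : ((0 : ℕ) : Fin (T+1)) = 0 := by norm_num
          rw [h1, h2]; ring
  -- Gibbs' inequality: KL(p ‖ q^{T+1}) ≥ 0
  have gibbs : 0 ≤ KLdiv p (q (Fin.last T)) := by
    set w := q (Fin.last T) with hwdef
    have hw : ∀ i, 0 < w i := hpos _
    have hws : ∑ i, w i = 1 := hsum _
    have h1 : ∑ i, p i * Real.log (w i / p i) ≤ ∑ i, (w i - p i) := by
      refine Finset.sum_le_sum fun i _ => ?_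
      rcases eq_or_lt_of_le (hp.1 i) with h0 | h0
      · simp [← h0]; exact (hw i).le
      · have hlog := Real.log_le_sub_one_of_pos (div_pos (hw i) h0)
        calc p i * Real.log (w i / p i) ≤ p i * (w i / p i - 1) :=
              mul_le_mul_of_nonneg_left hlog h0.le
          _ = w i - p i := by field_simp
    have h2 : ∑ i, (w i - p i) = 0 := by
      rw [Finset.sum_sub_distrib, hws, hp.2]; ring
    have h3 : KLdiv p w = -∑ i, p i * Real.log (w i / p i) := by
      unfold KLdiv
      rw [← Finset.sum_neg_distrib]
      refine Finset.sum_congr rfl fun i _ => ?_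
      rcases eq_or_lt_of_le (hp.1 i) with h0 | h0
      · simp [← h0]
      · rw [Real.log_div h0.ne' (hw i).ne', Real.log_div (hw i).ne' h0.ne']; ring
    rw [h3]; linarith
  have main : ∑ t : Fin T, ∑ i, p i * f t i
      = (∑ t : Fin T, ∑ i, q t.succ i * f t i)
        - (1/η) * ∑ t : Fin T, KLdiv (q t.succ) (q t.castSucc)
        + (1/η) * (KLdiv p (q 0) - KLdiv p (q (Fin.last T))) := by
    rw [Finset.sum_congr rfl (fun t _ => key t), Finset.sum_add_distrib,
      Finset.sum_sub_distrib, ← Finset.mul_sum, ← Finset.mul_sum, tele]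
  rw [main]
  have hnn : 0 ≤ (1/η) * KLdiv p (q (Fin.last T)) :=
    mul_nonneg (by positivity) gibbs
  have := mul_sub (1/η) (KLdiv p (q 0)) (KLdiv p (q (Fin.last T)))
  linarith
end

section
/- Let K be a positive integer, let Σ, O be finite nonempty sets, and for each k ∈ [K] let Π'_k be a finite nonempty set. Fix η > 0, distributions q_k ∈ Δ(Π'_k), elements π*_k ∈ Π'_k, a kernel M : Σ → Δ(O), and reward functions c_k : Σ → ℝ for each k ∈ [K]. For π ∈ Δ(Σ) with π(σ) > 0 for all σ ∈ Σ, and g = (g_1, …, g_K) with g_k : Π'_k × Σ × O → ℝ, define Γ(π, g) := Σ_{σ} π(σ) Σ_{k=1}^K c_k(σ) + (1/η) Σ_{k=1}^K Σ_{σ} π(σ) Σ_{o} M(σ)(o) Σ_{π'_k ∈ Π'_k} q_k(π'_k) · [ exp( (η/π(σ)) · ( g_k(π'_k; σ, o) − g_k(π*_k; σ, o) ) ) − 1 ]. Then the map (π, g) ↦ Γ(π, g) is jointly convex on the product of the open simplex {π ∈ Δ(Σ) : π(σ) > 0 for all σ} with the vector space of all tuples g. -/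
open Finset

/-- Perspective inequality for `exp`: the map `(x, s) ↦ x * exp (s / x)` is
jointly convex on `{x > 0}`. -/
lemma persp_exp_ineq (a b x y s t : ℝ) (ha : 0 ≤ a) (hb : 0 ≤ b) (hab : a + b = 1)
    (hx : 0 < x) (hy : 0 < y) :
    (a * x + b * y) * Real.exp ((a * s + b * t) / (a * x + b * y))
      ≤ a * (x * Real.exp (s / x)) + b * (y * Real.exp (t / y)) := by
  rcases ha.eq_or_lt with rfl | ha'
  · have hb1 : b = 1 := by linarith
    simp [hb1]
  rcases hb.eq_or_lt with rfl | hb'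
  · have ha1 : a = 1 := by linarith
    simp [ha1]
  have hX : 0 < a * x + b * y := by positivity
  set X := a * x + b * y with hXdef
  have hl : (0:ℝ) ≤ a * x / X := by positivity
  have hm : (0:ℝ) ≤ b * y / X := by positivity
  have hsum : a * x / X + b * y / X = 1 := by
    field_simp
    exact hXdef.symm
  have key := convexOn_exp.2 (Set.mem_univ (s / x)) (Set.mem_univ (t / y)) hl hm hsum
  simp only [smul_eq_mul] at key
  have harg : a * x / X * (s / x) + b * y / X * (t / y) = (a * s + b * t) / X := by
    field_simp
  rw [harg] at key
  have := mul_le_mul_of_nonneg_left key hX.le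
  calc X * Real.exp ((a * s + b * t) / X)
      ≤ X * (a * x / X * Real.exp (s / x) + b * y / X * Real.exp (t / y)) := this
    _ = a * (x * Real.exp (s / x)) + b * (y * Real.exp (t / y)) := by
        field_simp

/-- Termwise inequality for the exponential part of `Γ`. -/
lemma term_ineq (η a b x y s t : ℝ) (hη : 0 < η) (ha : 0 ≤ a) (hb : 0 ≤ b)
    (hab : a + b = 1) (hx : 0 < x) (hy : 0 < y) :
    (a * x + b * y) * (Real.exp ((η / (a * x + b * y)) * (a * s + b * t)) - 1)
      ≤ a * (x * (Real.exp ((η / x) * s) - 1)) + b * (y * (Real.exp ((η / y) * t) - 1)) := by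
  have h := persp_exp_ineq a b x y (η * s) (η * t) ha hb hab hx hy
  have e1 : (η / (a * x + b * y)) * (a * s + b * t)
      = (a * (η * s) + b * (η * t)) / (a * x + b * y) := by
    field_simp
  have e2 : (η / x) * s = (η * s) / x := by ring
  have e3 : (η / y) * t = (η * t) / y := by ring
  rw [e1, e2, e3]
  nlinarith [h]

/-- (joint convexity of the multi-agent exploration-by-optimization
objective `Γ_{q,η}(π, g; π*, M)` in the played distribution `π` and the reward
estimators `g = (g_1, …, g_K)`, for a fixed deviation profile `π*`, reference
distributions `q_k`, kernel `M`, and deviation-gain terms `c_k`):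
the map `(π, g) ↦ Γ(π, g)` is convex on the product of the open simplex over `Σ`
with the vector space of all estimator tuples `g`. -/
theorem Gamma_jointly_convex (K : ℕ) (hK : 0 < K)
    (S O : Type) [Fintype S] [Nonempty S] [Fintype O] [Nonempty O]
    (Dev : Fin K → Type) [∀ k, Fintype (Dev k)] [∀ k, Nonempty (Dev k)]
    (η : ℝ) (hη : 0 < η)
    (q : ∀ k, Dev k → ℝ) (hq : ∀ k, q k ∈ stdSimplex ℝ (Dev k))
    (πst : ∀ k, Dev k)
    (M : S → O → ℝ) (hM : ∀ σ, M σ ∈ stdSimplex ℝ O)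
    (c : Fin K → S → ℝ) :
    ConvexOn ℝ
      {pg : (S → ℝ) × (∀ k, Dev k → S → O → ℝ) |
        (∀ σ, 0 < pg.1 σ) ∧ ∑ σ, pg.1 σ = 1}
      (fun pg =>
        (∑ σ, pg.1 σ * ∑ k, c k σ)
          + (1 / η) * ∑ k, ∑ σ, pg.1 σ * ∑ o, M σ o * ∑ d, q k d *
              (Real.exp ((η / pg.1 σ) * (pg.2 k d σ o - pg.2 k (πst k) σ o)) - 1)) := by
  have hpos : ∀ (a b x y : ℝ), 0 ≤ a → 0 ≤ b → a + b = 1 → 0 < x → 0 < y →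
      0 < a * x + b * y := by
    intro a b x y ha hb hab hx hy
    rcases ha.eq_or_lt with rfl | ha'
    · have hb1 : b = 1 := by linarith
      simp [hb1, hy]
    · nlinarith [mul_nonneg hb hy.le]
  constructor
  · -- convexity of the domain
    intro pg hpg qg hqg a b ha hb hab
    obtain ⟨hpg1, hpg2⟩ := hpg
    obtain ⟨hqg1, hqg2⟩ := hqg
    constructor
    · intro σ
      simp only [Prod.fst_add, Prod.smul_fst, Pi.add_apply, Pi.smul_apply, smul_eq_mul]
      exact hpos a b _ _ ha hb hab (hpg1 σ) (hqg1 σ)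
    · simp only [Prod.fst_add, Prod.smul_fst, Pi.add_apply, Pi.smul_apply, smul_eq_mul]
      rw [Finset.sum_add_distrib, ← Finset.mul_sum, ← Finset.mul_sum, hpg2, hqg2]
      simpa using hab
  · intro pg hpg qg hqg a b ha hb hab
    obtain ⟨hpg1, hpg2⟩ := hpg
    obtain ⟨hqg1, hqg2⟩ := hqg
    simp only [Prod.fst_add, Prod.smul_fst, Prod.snd_add, Prod.smul_snd,
      Pi.add_apply, Pi.smul_apply, smul_eq_mul]
    -- linear part is an equality
    have h1 : ∑ σ, (a * pg.1 σ + b * qg.1 σ) * ∑ k, c k σ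
        = a * ∑ σ, pg.1 σ * ∑ k, c k σ + b * ∑ σ, qg.1 σ * ∑ k, c k σ := by
      rw [Finset.mul_sum, Finset.mul_sum, ← Finset.sum_add_distrib]
      refine Finset.sum_congr rfl fun σ _ => by ring
    -- exponential part
    have hS : ∑ k, ∑ σ, (a * pg.1 σ + b * qg.1 σ) * ∑ o, M σ o * ∑ d, q k d *
          (Real.exp ((η / (a * pg.1 σ + b * qg.1 σ)) *
            ((a * pg.2 k d σ o + b * qg.2 k d σ o)
              - (a * pg.2 k (πst k) σ o + b * qg.2 k (πst k) σ o))) - 1)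
        ≤ a * ∑ k, ∑ σ, pg.1 σ * ∑ o, M σ o * ∑ d, q k d *
              (Real.exp ((η / pg.1 σ) * (pg.2 k d σ o - pg.2 k (πst k) σ o)) - 1)
          + b * ∑ k, ∑ σ, qg.1 σ * ∑ o, M σ o * ∑ d, q k d *
              (Real.exp ((η / qg.1 σ) * (qg.2 k d σ o - qg.2 k (πst k) σ o)) - 1) := by
      rw [Finset.mul_sum, Finset.mul_sum, ← Finset.sum_add_distrib]
      refine Finset.sum_le_sum fun k _ => ?_
      rw [Finset.mul_sum, Finset.mul_sum, ← Finset.sum_add_distrib]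
      refine Finset.sum_le_sum fun σ _ => ?_
      set x := pg.1 σ with hxdef
      set y := qg.1 σ with hydef
      have hx : 0 < x := hpg1 σ
      have hy : 0 < y := hqg1 σ
      -- rewrite both sides as double sums over o, d
      have lhs_eq : (a * x + b * y) * ∑ o, M σ o * ∑ d, q k d *
            (Real.exp ((η / (a * x + b * y)) *
              ((a * pg.2 k d σ o + b * qg.2 k d σ o)
                - (a * pg.2 k (πst k) σ o + b * qg.2 k (πst k) σ o))) - 1)
          = ∑ o, ∑ d, (M σ o * q k d) * ((a * x + b * y) *
              (Real.exp ((η / (a * x + b * y)) *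
                (a * (pg.2 k d σ o - pg.2 k (πst k) σ o)
                  + b * (qg.2 k d σ o - qg.2 k (πst k) σ o))) - 1)) := by
        rw [Finset.mul_sum]
        refine Finset.sum_congr rfl fun o _ => ?_
        rw [Finset.mul_sum, Finset.mul_sum]
        refine Finset.sum_congr rfl fun d _ => ?_
        have : (a * pg.2 k d σ o + b * qg.2 k d σ o)
            - (a * pg.2 k (πst k) σ o + b * qg.2 k (πst k) σ o)
            = a * (pg.2 k d σ o - pg.2 k (πst k) σ o)
              + b * (qg.2 k d σ o - qg.2 k (πst k) σ o) := by ring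
        rw [this]
        ring
      have rhs_eq : a * (x * ∑ o, M σ o * ∑ d, q k d *
              (Real.exp ((η / x) * (pg.2 k d σ o - pg.2 k (πst k) σ o)) - 1))
          + b * (y * ∑ o, M σ o * ∑ d, q k d *
              (Real.exp ((η / y) * (qg.2 k d σ o - qg.2 k (πst k) σ o)) - 1))
          = ∑ o, ∑ d, (M σ o * q k d) *
              (a * (x * (Real.exp ((η / x) * (pg.2 k d σ o - pg.2 k (πst k) σ o)) - 1))
                + b * (y * (Real.exp ((η / y) * (qg.2 k d σ o - qg.2 k (πst k) σ o)) - 1))) := by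
        simp only [Finset.mul_sum]
        rw [← Finset.sum_add_distrib]
        refine Finset.sum_congr rfl fun o _ => ?_
        rw [← Finset.sum_add_distrib]
        refine Finset.sum_congr rfl fun d _ => ?_
        ring
      calc (a * x + b * y) * ∑ o, M σ o * ∑ d, q k d *
            (Real.exp ((η / (a * x + b * y)) *
              ((a * pg.2 k d σ o + b * qg.2 k d σ o)
                - (a * pg.2 k (πst k) σ o + b * qg.2 k (πst k) σ o))) - 1)
          = _ := lhs_eq
        _ ≤ ∑ o, ∑ d, (M σ o * q k d) *
              (a * (x * (Real.exp ((η / x) * (pg.2 k d σ o - pg.2 k (πst k) σ o)) - 1))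
                + b * (y * (Real.exp ((η / y) * (qg.2 k d σ o - qg.2 k (πst k) σ o)) - 1))) := by
            refine Finset.sum_le_sum fun o _ => Finset.sum_le_sum fun d _ => ?_
            refine mul_le_mul_of_nonneg_left ?_ (mul_nonneg ((hM σ).1 o) ((hq k).1 d))
            exact term_ineq η a b x y _ _ hη ha hb hab hx hy
        _ = _ := rhs_eq.symm
    rw [h1]
    have hη' : (0:ℝ) ≤ 1 / η := by positivity
    have h2 := mul_le_mul_of_nonneg_left hS hη'
    linarith [h2]
end

section
/- Let J = (M, Π, O, {Π'_k}_k, {Sw_k}_k) be a K-player instance satisfying Assumption 1, such that the convex-hull instance co(J) satisfies the nonnegative-deviation assumption: for every mixture model M ∈ co(M), every k ∈ [K], and every π ∈ Π, it holds that max_{dev ∈ Π'_k} f^M_k(Sw_k(dev, π)) − f^M_k(π) ≥ 0. Then for all γ > 0, the multi-agent parametrized information ratio satisfies infr_γ(J) ≤ K · decoreg_γ(co(J)). -/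
open Finset
open scoped Classical BigOperators

section MADMSO

variable {K : ℕ} {Sig Obs : Type} [Fintype Sig] [Fintype Obs]
variable {Dev : Fin K → Type} [∀ k, Fintype (Dev k)]

/-- Expected reward of player `k` under kernel `M` at the pure joint decision `σ`:
`f^M_k(σ) = E_{o ∼ M(σ)}[r_k]`. -/
noncomputable def fpure (M : Sig → Obs → ℝ) (reward : Fin K → Obs → ℝ)
    (k : Fin K) (σ : Sig) : ℝ :=
  ∑ o, M σ o * reward k o

/-- Affine extension of `f^M_k` to distributions `π ∈ Δ(Σ)`. -/
noncomputable def fmix (M : Sig → Obs → ℝ) (reward : Fin K → Obs → ℝ)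
    (k : Fin K) (π : Sig → ℝ) : ℝ :=
  ∑ σ, π σ * fpure M reward k σ

/-- Point mass at `σ`, viewed as an element of `Δ(Σ)`. -/
noncomputable def deltaPt (σ : Sig) : Sig → ℝ := fun σ' => if σ' = σ then 1 else 0

/-- Suboptimality `h^M(π) = Σ_k max_{dev ∈ Π'_k} f^M_k(Sw_k(dev, π)) − f^M_k(π)`. -/
noncomputable def hgap (Sw : ∀ k, Dev k → (Sig → ℝ) → (Sig → ℝ))
    (reward : Fin K → Obs → ℝ) (M : Sig → Obs → ℝ) (π : Sig → ℝ) : ℝ :=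
  ∑ k, ((⨆ d : Dev k, fmix M reward k (Sw k d π)) - fmix M reward k π)

/-- The class of all finite mixtures of models in `Models` (the model class of `co(J)`). -/
def coModels (Models : Set (Sig → Obs → ℝ)) : Set (Sig → Obs → ℝ) :=
  {Mb | ∃ (m : ℕ) (w : Fin m → ℝ) (Ms : Fin m → Sig → Obs → ℝ),
    (∀ i, 0 ≤ w i) ∧ (∑ i, w i = 1) ∧ (∀ i, Ms i ∈ Models) ∧
    Mb = fun σ o => ∑ i, w i * Ms i σ o}

/-- Squared Hellinger distance between finitely supported distributions
(`H² ∈ [0, 2]` normalization). -/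
noncomputable def hellSq {X : Type} [Fintype X] (p q : X → ℝ) : ℝ :=
  ∑ x, (Real.sqrt (p x) - Real.sqrt (q x)) ^ 2

/-- Observation distribution `M(π)` of kernel `M` at a mixed decision `π ∈ Δ(Σ)`. -/
noncomputable def obsAt (M : Sig → Obs → ℝ) (π : Sig → ℝ) : Obs → ℝ :=
  fun o => ∑ σ, π σ * M σ o

/-- Finitely supported probability distributions on `X`. -/
def FinDist (X : Type*) : Type _ :=
  {p : X →₀ ℝ // (∀ x, 0 ≤ p x) ∧ (p.sum fun _ v => v) = 1}

/-- The offset multi-agent decision-estimation coefficient of the convex hull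
instance `co(J)`:
`decoreg_γ(co(J)) = sup_{M̄ ∈ co(M)} inf_{p ∈ Δ(Π)} sup_{M ∈ co(M)}
   E_{π ∼ p}[ h^M(π) − γ·H²(M(π), M̄(π)) ]`. -/
noncomputable def decoregCo (γ : ℝ) (Models : Set (Sig → Obs → ℝ))
    (reward : Fin K → Obs → ℝ) (Sw : ∀ k, Dev k → (Sig → ℝ) → (Sig → ℝ)) : ℝ :=
  ⨆ Mb : coModels Models,
    ⨅ p : FinDist {π : Sig → ℝ // π ∈ stdSimplex ℝ Sig},
      ⨆ M : coModels Models,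
        p.1.sum fun π v =>
          v * (hgap Sw reward M.1 π.1 - γ * hellSq (obsAt M.1 π.1) (obsAt Mb.1 π.1))

/-- Prior distribution `μ_prior^k ∈ Δ(Π'_k)`: the marginal law of `π*_k` under `μ`. -/
noncomputable def priorDist (Models : Set (Sig → Obs → ℝ))
    (μ : FinDist (↥Models × ∀ k, Dev k)) (k : Fin K) : Dev k → ℝ :=
  fun d => μ.1.sum fun Mp v => if Mp.2 k = d then v else 0

/-- Probability of observing `o` given the pure decision `σ`, under
`(M, π*) ∼ μ`, `o ∼ M(σ)`. -/
noncomputable def obsProb (Models : Set (Sig → Obs → ℝ))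
    (μ : FinDist (↥Models × ∀ k, Dev k)) (σ : Sig) (o : Obs) : ℝ :=
  μ.1.sum fun Mp v => v * Mp.1.1 σ o

/-- Posterior distribution `μ_post^k(·; σ, o) ∈ Δ(Π'_k)`: the conditional law of
`π*_k` given the decision-observation pair `(σ, o)`. -/
noncomputable def postDist (Models : Set (Sig → Obs → ℝ))
    (μ : FinDist (↥Models × ∀ k, Dev k)) (k : Fin K) (σ : Sig) (o : Obs) :
    Dev k → ℝ :=
  fun d =>
    (μ.1.sum fun Mp v => if Mp.2 k = d then v * Mp.1.1 σ o else 0) /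
      obsProb Models μ σ o

/-- The multi-agent parametrized information ratio `infr_γ(J)`. -/
noncomputable def infrVal (γ : ℝ) (Models : Set (Sig → Obs → ℝ))
    (reward : Fin K → Obs → ℝ) (Sw : ∀ k, Dev k → (Sig → ℝ) → (Sig → ℝ)) : ℝ :=
  ⨆ μ : FinDist (↥Models × ∀ k, Dev k),
    ⨅ π : {π : Sig → ℝ // π ∈ stdSimplex ℝ Sig},
      (μ.1.sum fun Mp v => v * ∑ σ, π.1 σ *
          ∑ k, (fmix Mp.1.1 reward k (Sw k (Mp.2 k) (deltaPt σ)) -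
                  fpure Mp.1.1 reward k σ))
        - γ * ∑ σ, π.1 σ * ∑ o, obsProb Models μ σ o *
            ∑ k, hellSq (postDist Models μ k σ o) (priorDist Models μ k)

end MADMSO
section Helpers

open Finset

/-- Jensen/Cauchy–Schwarz: pointwise joint convexity of the squared Hellinger integrand. -/
lemma sqrt_comb_le {X : Type} [Fintype X] (w a b : X → ℝ)
    (hw : ∀ x, 0 ≤ w x) (ha : ∀ x, 0 ≤ a x) (hb : ∀ x, 0 ≤ b x) :
    (Real.sqrt (∑ x, w x * a x) - Real.sqrt (∑ x, w x * b x)) ^ 2 ≤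
      ∑ x, w x * (Real.sqrt (a x) - Real.sqrt (b x)) ^ 2 := by
  have hA : (0:ℝ) ≤ ∑ x, w x * a x := sum_nonneg fun x _ => mul_nonneg (hw x) (ha x)
  have hB : (0:ℝ) ≤ ∑ x, w x * b x := sum_nonneg fun x _ => mul_nonneg (hw x) (hb x)
  have hCS : ∑ x, Real.sqrt (w x * a x) * Real.sqrt (w x * b x) ≤
      Real.sqrt (∑ x, w x * a x) * Real.sqrt (∑ x, w x * b x) :=
    Real.sum_sqrt_mul_sqrt_le _ (fun x => mul_nonneg (hw x) (ha x))
      (fun x => mul_nonneg (hw x) (hb x))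
  have hterm : ∀ x, Real.sqrt (w x * a x) * Real.sqrt (w x * b x)
      = w x * (Real.sqrt (a x) * Real.sqrt (b x)) := by
    intro x
    rw [Real.sqrt_mul (hw x), Real.sqrt_mul (hw x), mul_mul_mul_comm,
      Real.mul_self_sqrt (hw x)]
  have expand : ∀ u v : ℝ, 0 ≤ u → 0 ≤ v →
      (Real.sqrt u - Real.sqrt v) ^ 2 = u + v - 2 * (Real.sqrt u * Real.sqrt v) := by
    intro u v hu hv
    rw [sub_sq, Real.sq_sqrt hu, Real.sq_sqrt hv]; ring
  have hRHS : ∑ x, w x * (Real.sqrt (a x) - Real.sqrt (b x)) ^ 2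
      = (∑ x, w x * a x) + (∑ x, w x * b x)
        - 2 * ∑ x, w x * (Real.sqrt (a x) * Real.sqrt (b x)) := by
    rw [← Finset.sum_add_distrib, Finset.mul_sum, ← Finset.sum_sub_distrib]
    refine Finset.sum_congr rfl fun x _ => ?_
    rw [expand _ _ (ha x) (hb x)]; ring
  have hCS' : ∑ x, w x * (Real.sqrt (a x) * Real.sqrt (b x)) ≤
      Real.sqrt (∑ x, w x * a x) * Real.sqrt (∑ x, w x * b x) := by
    calc ∑ x, w x * (Real.sqrt (a x) * Real.sqrt (b x))
        = ∑ x, Real.sqrt (w x * a x) * Real.sqrt (w x * b x) := by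
          exact (Finset.sum_congr rfl fun x _ => (hterm x).symm)
      _ ≤ _ := hCS
  rw [expand _ _ hA hB, hRHS]
  linarith

end Helpers
section Helpers2

open Finset

lemma deltaPt_mem {X : Type} [Fintype X] (σ : X) : deltaPt σ ∈ stdSimplex ℝ X := by
  constructor
  · intro x; unfold deltaPt; split <;> norm_num
  · simp [deltaPt]

lemma affine_vertex {X : Type} [Fintype X] (F : (X → ℝ) → ℝ)
    (hF : ∀ π₁ π₂ : X → ℝ, π₁ ∈ stdSimplex ℝ X → π₂ ∈ stdSimplex ℝ X →
      ∀ t : ℝ, 0 ≤ t → t ≤ 1 →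
        F (fun σ => t * π₁ σ + (1 - t) * π₂ σ) = t * F π₁ + (1 - t) * F π₂) :
    ∀ π ∈ stdSimplex ℝ X, F π = ∑ σ, π σ * F (deltaPt σ) := by
  classical
  suffices h : ∀ (s : Finset X) (π : X → ℝ), π ∈ stdSimplex ℝ X → (∀ σ ∉ s, π σ = 0) →
      F π = ∑ σ ∈ s, π σ * F (deltaPt σ) by
    intro π hπ
    exact h univ π hπ (fun σ hσ => absurd (mem_univ σ) hσ)
  intro s
  induction s using Finset.induction_on with
  | empty =>
    intro π hπ hsupp
    exfalso
    have h0 : ∑ σ, π σ = 0 :=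
      Finset.sum_eq_zero (fun σ _ => hsupp σ (notMem_empty σ))
    rw [hπ.2] at h0; norm_num at h0
  | @insert a s ha ih =>
    intro π hπ hsupp
    have ht0 : 0 ≤ π a := hπ.1 a
    have hsum : ∑ σ, π σ = 1 := hπ.2
    have ht1 : π a ≤ 1 := by
      rw [← hsum]
      exact Finset.single_le_sum (fun σ _ => hπ.1 σ) (mem_univ a)
    have herase : ∑ x ∈ univ.erase a, π x = 1 - π a := by
      have := Finset.sum_erase_add univ π (mem_univ a)
      rw [hsum] at this; linarith
    by_cases htop : π a = 1
    · have hzero : ∀ σ, σ ≠ a → π σ = 0 := by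
        intro σ hσ
        have h0 : ∑ x ∈ univ.erase a, π x = 0 := by rw [herase, htop]; ring
        exact (Finset.sum_eq_zero_iff_of_nonneg (fun x _ => hπ.1 x)).1 h0 σ
          (Finset.mem_erase.2 ⟨hσ, mem_univ σ⟩)
      have hπeq : π = deltaPt a := by
        funext σ
        by_cases hσ : σ = a
        · subst hσ; simp [deltaPt, htop]
        · simp [deltaPt, hσ, hzero σ hσ]
      have hs0 : ∑ σ ∈ s, deltaPt a σ * F (deltaPt σ) = 0 := by
        refine Finset.sum_eq_zero fun σ hσ => ?_
        have hne : σ ≠ a := fun h => ha (h ▸ hσ)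
        simp [deltaPt, hne]
      have hda : deltaPt a a = (1:ℝ) := by simp [deltaPt]
      rw [hπeq, Finset.sum_insert ha, hs0, hda]; ring
    · have htlt : π a < 1 := lt_of_le_of_ne ht1 htop
      have h1t : 0 < 1 - π a := by linarith
      set π₂ : X → ℝ := fun σ => if σ = a then 0 else π σ / (1 - π a) with hπ₂def
      have hπ₂mem : π₂ ∈ stdSimplex ℝ X := by
        constructor
        · intro x
          simp only [hπ₂def]
          split
          · exact le_refl 0
          · exact div_nonneg (hπ.1 x) h1t.le
        · have h1 : ∑ x, π₂ x = ∑ x ∈ univ.erase a, π₂ x + π₂ a :=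
            (Finset.sum_erase_add univ π₂ (mem_univ a)).symm
          have h2 : π₂ a = 0 := by simp [hπ₂def]
          have h3 : ∑ x ∈ univ.erase a, π₂ x = ∑ x ∈ univ.erase a, π x / (1 - π a) := by
            refine Finset.sum_congr rfl fun x hx => ?_
            have hxa : x ≠ a := (Finset.mem_erase.1 hx).1
            simp [hπ₂def, hxa]
          rw [h1, h2, h3, ← Finset.sum_div, herase]
          field_simp; norm_num
      have hsupp₂ : ∀ σ ∉ s, π₂ σ = 0 := by
        intro σ hσ
        by_cases hσa : σ = a
        · simp [hπ₂def, hσa]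
        · have hni : σ ∉ insert a s := by
            simp [Finset.mem_insert, hσa, hσ]
          simp [hπ₂def, hσa, hsupp σ hni]
      have hcomb : π = fun σ => π a * deltaPt a σ + (1 - π a) * π₂ σ := by
        funext σ
        by_cases hσ : σ = a
        · subst hσ; simp [deltaPt, hπ₂def]
        · simp only [deltaPt, hπ₂def, if_neg hσ]
          field_simp; ring
      calc F π = π a * F (deltaPt a) + (1 - π a) * F π₂ := by
            conv_lhs => rw [hcomb]
            exact hF (deltaPt a) π₂ (deltaPt_mem a) hπ₂mem (π a) ht0 ht1
        _ = π a * F (deltaPt a) + (1 - π a) * ∑ σ ∈ s, π₂ σ * F (deltaPt σ) := by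
            rw [ih π₂ hπ₂mem hsupp₂]
        _ = π a * F (deltaPt a) + ∑ σ ∈ s, π σ * F (deltaPt σ) := by
            rw [Finset.mul_sum]
            congr 1
            refine Finset.sum_congr rfl fun σ hσ => ?_
            have hσa : σ ≠ a := fun h => ha (h ▸ hσ)
            simp only [hπ₂def, if_neg hσa]
            field_simp
        _ = ∑ σ ∈ insert a s, π σ * F (deltaPt σ) := by rw [Finset.sum_insert ha]

end Helpers2
set_option linter.unusedSectionVars false
section Helpers3

open Finset

variable {Sig Obs : Type} [Fintype Sig] [Fintype Obs]

lemma mix_mem_coModels (Models : Set (Sig → Obs → ℝ)) {Y : Type}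
    (s : Finset Y) (W : Y → ℝ) (G : Y → Sig → Obs → ℝ)
    (hW : ∀ y ∈ s, 0 ≤ W y) (hsum : ∑ y ∈ s, W y = 1) (hG : ∀ y ∈ s, G y ∈ Models) :
    (fun σ o => ∑ y ∈ s, W y * G y σ o) ∈ coModels Models := by
  classical
  refine ⟨s.card, fun i => W ((s.equivFin.symm i) : Y),
    fun i => G ((s.equivFin.symm i) : Y), fun i => hW _ (s.equivFin.symm i).2, ?_, 
    fun i => hG _ (s.equivFin.symm i).2, ?_⟩
  · rw [Equiv.sum_comp s.equivFin.symm (fun y : s => W (y : Y)), Finset.sum_coe_sort s W]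
    exact hsum
  · funext σ o
    rw [Equiv.sum_comp s.equivFin.symm (fun y : s => W (y : Y) * G (y : Y) σ o),
      Finset.sum_coe_sort s (fun y => W y * G y σ o)]

lemma mem_coModels_self {Models : Set (Sig → Obs → ℝ)} {M : Sig → Obs → ℝ}
    (hM : M ∈ Models) : M ∈ coModels Models := by
  refine ⟨1, fun _ => 1, fun _ => M, fun _ => zero_le_one, by simp, fun _ => hM, ?_⟩
  funext σ o; simp

lemma coModels_nonempty {Models : Set (Sig → Obs → ℝ)} (h : Models.Nonempty) :
    (coModels Models).Nonempty := ⟨h.choose, mem_coModels_self h.choose_spec⟩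

lemma coModels_isEmpty {Models : Set (Sig → Obs → ℝ)} (h : ¬ Models.Nonempty) :
    IsEmpty (coModels Models) := by
  constructor
  rintro ⟨M, m, w, Ms, hw, hsum, hMs, _⟩
  have hm : m ≠ 0 := by rintro rfl; simp at hsum
  exact h ⟨Ms ⟨0, Nat.pos_of_ne_zero hm⟩, hMs _⟩

lemma coModels_rows {Models : Set (Sig → Obs → ℝ)}
    (hModels : ∀ M ∈ Models, ∀ σ, M σ ∈ stdSimplex ℝ Obs) :
    ∀ M ∈ coModels Models, ∀ σ, M σ ∈ stdSimplex ℝ Obs := by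
  rintro M ⟨m, w, Ms, hw, hsum, hMs, rfl⟩ σ
  constructor
  · intro o
    exact sum_nonneg fun i _ => mul_nonneg (hw i) ((hModels _ (hMs i) σ).1 o)
  · calc ∑ o, ∑ i, w i * Ms i σ o = ∑ i, ∑ o, w i * Ms i σ o := Finset.sum_comm
      _ = ∑ i, w i * ∑ o, Ms i σ o := by
          exact Finset.sum_congr rfl fun i _ => (Finset.mul_sum _ _ _).symm
      _ = ∑ i, w i := by
          refine Finset.sum_congr rfl fun i _ => ?_
          rw [(hModels _ (hMs i) σ).2, mul_one]
      _ = 1 := hsum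

lemma fpure_mem_Icc {K : ℕ} {M : Sig → Obs → ℝ} {reward : Fin K → Obs → ℝ}
    (hrow : ∀ σ, M σ ∈ stdSimplex ℝ Obs)
    (hreward : ∀ k o, reward k o ∈ Set.Icc (0:ℝ) 1) (k : Fin K) (σ : Sig) :
    fpure M reward k σ ∈ Set.Icc (0:ℝ) 1 := by
  constructor
  · exact sum_nonneg fun o _ => mul_nonneg ((hrow σ).1 o) (hreward k o).1
  · have h1 : ∑ o, M σ o * reward k o ≤ ∑ o, M σ o * 1 :=
      Finset.sum_le_sum fun o _ =>
        mul_le_mul_of_nonneg_left (hreward k o).2 ((hrow σ).1 o)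
    have h2 : ∑ o, M σ o * 1 = 1 := by simp [(hrow σ).2]
    unfold fpure; linarith

lemma fmix_mem_Icc {K : ℕ} {M : Sig → Obs → ℝ} {reward : Fin K → Obs → ℝ}
    (hrow : ∀ σ, M σ ∈ stdSimplex ℝ Obs)
    (hreward : ∀ k o, reward k o ∈ Set.Icc (0:ℝ) 1) (k : Fin K) {π : Sig → ℝ}
    (hπ : π ∈ stdSimplex ℝ Sig) :
    fmix M reward k π ∈ Set.Icc (0:ℝ) 1 := by
  constructor
  · exact sum_nonneg fun σ _ =>
      mul_nonneg (hπ.1 σ) (fpure_mem_Icc hrow hreward k σ).1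
  · have h1 : ∑ σ, π σ * fpure M reward k σ ≤ ∑ σ, π σ * 1 :=
      Finset.sum_le_sum fun σ _ =>
        mul_le_mul_of_nonneg_left (fpure_mem_Icc hrow hreward k σ).2 (hπ.1 σ)
    have h2 : ∑ σ, π σ * 1 = 1 := by simp [hπ.2]
    unfold fmix; linarith

lemma finDist_isEmpty {X : Type*} [IsEmpty X] : IsEmpty (FinDist X) := by
  constructor
  rintro ⟨p, hp, hsum⟩
  have : p.support = ∅ := Finset.eq_empty_of_forall_notMem fun x => isEmptyElim x
  rw [Finsupp.sum, this, Finset.sum_empty] at hsum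
  norm_num at hsum

end Helpers3
section Helpers4
set_option linter.unusedSectionVars false

open Finset

variable {Sig Obs : Type} [Fintype Sig] [Fintype Obs]

lemma hellSq_nonneg {X : Type} [Fintype X] (p q : X → ℝ) : 0 ≤ hellSq p q :=
  sum_nonneg fun _ _ => sq_nonneg _

lemma hellSq_self {X : Type} [Fintype X] (p : X → ℝ) : hellSq p p = 0 := by
  simp [hellSq]

lemma hellSq_le_two {X : Type} [Fintype X] {p q : X → ℝ}
    (hp : ∀ x, 0 ≤ p x) (hq : ∀ x, 0 ≤ q x)
    (hps : ∑ x, p x ≤ 1) (hqs : ∑ x, q x ≤ 1) : hellSq p q ≤ 2 := by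
  have hpt : ∀ x, (Real.sqrt (p x) - Real.sqrt (q x)) ^ 2 ≤ p x + q x := by
    intro x
    have h1 : (Real.sqrt (p x) - Real.sqrt (q x)) ^ 2
        = p x + q x - 2 * (Real.sqrt (p x) * Real.sqrt (q x)) := by
      rw [sub_sq, Real.sq_sqrt (hp x), Real.sq_sqrt (hq x)]; ring
    have h2 : 0 ≤ Real.sqrt (p x) * Real.sqrt (q x) :=
      mul_nonneg (Real.sqrt_nonneg _) (Real.sqrt_nonneg _)
    linarith
  calc hellSq p q ≤ ∑ x, (p x + q x) := Finset.sum_le_sum fun x _ => hpt x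
    _ = (∑ x, p x) + ∑ x, q x := Finset.sum_add_distrib
    _ ≤ 2 := by linarith

lemma sqrt_sub_sq_scale {c a b : ℝ} (hc : 0 ≤ c) (ha : 0 ≤ a) (hb : 0 ≤ b) :
    (Real.sqrt (c * a) - Real.sqrt (c * b)) ^ 2
      = c * (Real.sqrt a - Real.sqrt b) ^ 2 := by
  rw [Real.sqrt_mul hc, Real.sqrt_mul hc, ← mul_sub, mul_pow, Real.sq_sqrt hc]

lemma fpure_sum_kernel {K : ℕ} {Y : Type} (s : Finset Y) (W : Y → ℝ)
    (G : Y → Sig → Obs → ℝ) (reward : Fin K → Obs → ℝ) (k : Fin K) (σ : Sig) :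
    fpure (fun σ o => ∑ y ∈ s, W y * G y σ o) reward k σ
      = ∑ y ∈ s, W y * fpure (G y) reward k σ := by
  unfold fpure
  calc ∑ o, (∑ y ∈ s, W y * G y σ o) * reward k o
      = ∑ o, ∑ y ∈ s, W y * (G y σ o * reward k o) := by
        refine Finset.sum_congr rfl fun o _ => ?_
        rw [Finset.sum_mul]
        exact Finset.sum_congr rfl fun y _ => by ring
    _ = ∑ y ∈ s, ∑ o, W y * (G y σ o * reward k o) := Finset.sum_comm
    _ = ∑ y ∈ s, W y * ∑ o, G y σ o * reward k o := by
        exact Finset.sum_congr rfl fun y _ => (Finset.mul_sum _ _ _).symm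

lemma fmix_sum_kernel {K : ℕ} {Y : Type} (s : Finset Y) (W : Y → ℝ)
    (G : Y → Sig → Obs → ℝ) (reward : Fin K → Obs → ℝ) (k : Fin K) (π : Sig → ℝ) :
    fmix (fun σ o => ∑ y ∈ s, W y * G y σ o) reward k π
      = ∑ y ∈ s, W y * fmix (G y) reward k π := by
  unfold fmix
  calc ∑ σ, π σ * fpure (fun σ o => ∑ y ∈ s, W y * G y σ o) reward k σ
      = ∑ σ, ∑ y ∈ s, W y * (π σ * fpure (G y) reward k σ) := by
        refine Finset.sum_congr rfl fun σ _ => ?_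
        rw [fpure_sum_kernel, Finset.mul_sum]
        exact Finset.sum_congr rfl fun y _ => by ring
    _ = ∑ y ∈ s, ∑ σ, W y * (π σ * fpure (G y) reward k σ) := Finset.sum_comm
    _ = ∑ y ∈ s, W y * ∑ σ, π σ * fpure (G y) reward k σ := by
        exact Finset.sum_congr rfl fun y _ => (Finset.mul_sum _ _ _).symm

lemma fmix_smul_kernel {K : ℕ} (c : ℝ) (M : Sig → Obs → ℝ)
    (reward : Fin K → Obs → ℝ) (k : Fin K) (π : Sig → ℝ) :
    fmix (fun σ o => c * M σ o) reward k π = c * fmix M reward k π := by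
  unfold fmix fpure
  rw [Finset.mul_sum]
  refine Finset.sum_congr rfl fun σ _ => ?_
  rw [Finset.mul_sum, Finset.mul_sum, Finset.mul_sum]
  exact Finset.sum_congr rfl fun o _ => by ring

end Helpers4
section Helpers5
set_option linter.unusedSectionVars false

open Finset

lemma finsupp_sum_eq {X : Type*} (p : X →₀ ℝ) (g : X → ℝ → ℝ) :
    p.sum g = ∑ x ∈ p.support, g x (p x) := rfl

noncomputable def finDistPure {X : Type*} (x : X) : FinDist X :=
  ⟨Finsupp.single x 1,
   fun y => by
     classical
     rw [Finsupp.single_apply]; split <;> norm_num,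
   by simp [Finsupp.sum_single_index]⟩

lemma finDist_suppsum {X : Type*} (p : FinDist X) : ∑ x ∈ p.1.support, p.1 x = 1 := p.2.2

lemma finDist_weighted_le {X : Type*} (p : FinDist X) (f : X → ℝ) (c : ℝ)
    (h : ∀ x ∈ p.1.support, f x ≤ c) :
    (p.1.sum fun x v => v * f x) ≤ c := by
  rw [finsupp_sum_eq]
  calc ∑ x ∈ p.1.support, p.1 x * f x ≤ ∑ x ∈ p.1.support, p.1 x * c :=
      Finset.sum_le_sum fun x hx => mul_le_mul_of_nonneg_left (h x hx) (p.2.1 x)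
    _ = (∑ x ∈ p.1.support, p.1 x) * c := by rw [Finset.sum_mul]
    _ = c := by rw [finDist_suppsum, one_mul]

lemma finDist_weighted_ge {X : Type*} (p : FinDist X) (f : X → ℝ) (c : ℝ)
    (h : ∀ x ∈ p.1.support, c ≤ f x) :
    c ≤ p.1.sum fun x v => v * f x := by
  rw [finsupp_sum_eq]
  calc c = (∑ x ∈ p.1.support, p.1 x) * c := by rw [finDist_suppsum, one_mul]
    _ = ∑ x ∈ p.1.support, p.1 x * c := by rw [Finset.sum_mul]
    _ ≤ ∑ x ∈ p.1.support, p.1 x * f x :=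
      Finset.sum_le_sum fun x hx => mul_le_mul_of_nonneg_left (h x hx) (p.2.1 x)

lemma finDist_weighted_mono {X : Type*} (p : FinDist X) (f g : X → ℝ)
    (h : ∀ x ∈ p.1.support, f x ≤ g x) :
    (p.1.sum fun x v => v * f x) ≤ p.1.sum fun x v => v * g x := by
  rw [finsupp_sum_eq, finsupp_sum_eq]
  exact Finset.sum_le_sum fun x hx => mul_le_mul_of_nonneg_left (h x hx) (p.2.1 x)

lemma finDist_weighted_const {X : Type*} (p : FinDist X) (c : ℝ) :
    (p.1.sum fun _ v => v * c) = c := by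
  rw [finsupp_sum_eq, ← Finset.sum_mul, finDist_suppsum, one_mul]

lemma finDist_sum_swap {X Y : Type*} (p : FinDist X) (t : Finset Y) (F : X → Y → ℝ) :
    (p.1.sum fun x v => v * ∑ y ∈ t, F x y) = ∑ y ∈ t, p.1.sum fun x v => v * F x y := by
  rw [finsupp_sum_eq]
  have h1 : ∀ x ∈ p.1.support, p.1 x * ∑ y ∈ t, F x y = ∑ y ∈ t, p.1 x * F x y :=
    fun x _ => Finset.mul_sum _ _ _
  rw [Finset.sum_congr rfl h1, Finset.sum_comm]
  exact Finset.sum_congr rfl fun y _ => (finsupp_sum_eq p.1 (fun x v => v * F x y)).symm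

end Helpers5
section Helpers6
set_option linter.unusedSectionVars false
set_option linter.unusedVariables false

open Finset

variable {K : ℕ} {Sig Obs : Type} [Fintype Sig] [Fintype Obs]
variable {Dev : Fin K → Type} [∀ k, Fintype (Dev k)]

lemma obsAt_nonneg {M : Sig → Obs → ℝ} (hrow : ∀ σ, M σ ∈ stdSimplex ℝ Obs)
    {π : Sig → ℝ} (hπ : ∀ σ, 0 ≤ π σ) (o : Obs) : 0 ≤ obsAt M π o :=
  sum_nonneg fun σ _ => mul_nonneg (hπ σ) ((hrow σ).1 o)

lemma obsAt_sum_one {M : Sig → Obs → ℝ} (hrow : ∀ σ, M σ ∈ stdSimplex ℝ Obs)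
    {π : Sig → ℝ} (hπ : π ∈ stdSimplex ℝ Sig) : ∑ o, obsAt M π o = 1 := by
  unfold obsAt
  rw [Finset.sum_comm]
  calc ∑ σ, ∑ o, π σ * M σ o = ∑ σ, π σ * ∑ o, M σ o :=
      Finset.sum_congr rfl fun σ _ => (Finset.mul_sum _ _ _).symm
    _ = ∑ σ, π σ := Finset.sum_congr rfl fun σ _ => by rw [(hrow σ).2, mul_one]
    _ = 1 := hπ.2

lemma hgap_le_K {reward : Fin K → Obs → ℝ} {Sw : ∀ k, Dev k → (Sig → ℝ) → (Sig → ℝ)}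
    [∀ k, Nonempty (Dev k)]
    {M : Sig → Obs → ℝ} (hrow : ∀ σ, M σ ∈ stdSimplex ℝ Obs)
    (hreward : ∀ k o, reward k o ∈ Set.Icc (0:ℝ) 1)
    (hSw : ∀ k d π, π ∈ stdSimplex ℝ Sig → Sw k d π ∈ stdSimplex ℝ Sig)
    {π : Sig → ℝ} (hπ : π ∈ stdSimplex ℝ Sig) :
    hgap Sw reward M π ≤ K := by
  unfold hgap
  calc ∑ k, ((⨆ d : Dev k, fmix M reward k (Sw k d π)) - fmix M reward k π)
      ≤ ∑ k : Fin K, (1:ℝ) := by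
        refine Finset.sum_le_sum fun k _ => ?_
        have h1 : (⨆ d : Dev k, fmix M reward k (Sw k d π)) ≤ 1 :=
          Real.iSup_le (fun d => (fmix_mem_Icc hrow hreward k (hSw k d π hπ)).2) zero_le_one
        have h2 : 0 ≤ fmix M reward k π := (fmix_mem_Icc hrow hreward k hπ).1
        linarith
    _ = K := by simp

/-- The body of the DEC. -/
noncomputable def Ep (γ : ℝ) (reward : Fin K → Obs → ℝ)
    (Sw : ∀ k, Dev k → (Sig → ℝ) → (Sig → ℝ))
    (p : FinDist {π : Sig → ℝ // π ∈ stdSimplex ℝ Sig}) (M Mb : Sig → Obs → ℝ) : ℝ :=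
  p.1.sum fun π v => v * (hgap Sw reward M π.1 - γ * hellSq (obsAt M π.1) (obsAt Mb π.1))

lemma decoregCo_def (γ : ℝ) (Models : Set (Sig → Obs → ℝ)) (reward : Fin K → Obs → ℝ)
    (Sw : ∀ k, Dev k → (Sig → ℝ) → (Sig → ℝ)) :
    decoregCo γ Models reward Sw
      = ⨆ Mb : coModels Models, ⨅ p : FinDist {π : Sig → ℝ // π ∈ stdSimplex ℝ Sig},
          ⨆ M : coModels Models, Ep γ reward Sw p M.1 Mb.1 := rfl

variable {γ : ℝ} {Models : Set (Sig → Obs → ℝ)} {reward : Fin K → Obs → ℝ}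
  {Sw : ∀ k, Dev k → (Sig → ℝ) → (Sig → ℝ)}

lemma Ep_le_K [∀ k, Nonempty (Dev k)] (hγ : 0 ≤ γ)
    (hreward : ∀ k o, reward k o ∈ Set.Icc (0:ℝ) 1)
    (hSw : ∀ k d π, π ∈ stdSimplex ℝ Sig → Sw k d π ∈ stdSimplex ℝ Sig)
    {M Mb : Sig → Obs → ℝ} (hrowM : ∀ σ, M σ ∈ stdSimplex ℝ Obs)
    (p : FinDist {π : Sig → ℝ // π ∈ stdSimplex ℝ Sig}) :
    Ep γ reward Sw p M Mb ≤ K := by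
  refine finDist_weighted_le p _ _ fun π _ => ?_
  have h1 : hgap Sw reward M π.1 ≤ K := hgap_le_K hrowM hreward hSw π.2
  have h2 : 0 ≤ hellSq (obsAt M π.1) (obsAt Mb π.1) := hellSq_nonneg _ _
  nlinarith

lemma neg_le_Ep (hγ : 0 ≤ γ)
    {M Mb : Sig → Obs → ℝ} (hrowM : ∀ σ, M σ ∈ stdSimplex ℝ Obs)
    (hrowMb : ∀ σ, Mb σ ∈ stdSimplex ℝ Obs)
    (hgap0 : ∀ π ∈ stdSimplex ℝ Sig, 0 ≤ hgap Sw reward M π)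
    (p : FinDist {π : Sig → ℝ // π ∈ stdSimplex ℝ Sig}) :
    -(2*γ) ≤ Ep γ reward Sw p M Mb := by
  refine finDist_weighted_ge p _ _ fun π _ => ?_
  have h1 : 0 ≤ hgap Sw reward M π.1 := hgap0 π.1 π.2
  have h2 : hellSq (obsAt M π.1) (obsAt Mb π.1) ≤ 2 :=
    hellSq_le_two (obsAt_nonneg hrowM (fun σ => π.2.1 σ))
      (obsAt_nonneg hrowMb (fun σ => π.2.1 σ))
      (le_of_eq (obsAt_sum_one hrowM π.2)) (le_of_eq (obsAt_sum_one hrowMb π.2))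
  nlinarith

end Helpers6
section Helpers7
set_option linter.unusedSectionVars false
set_option linter.unusedVariables false

open Finset

instance finDist_nonempty {X : Type*} [Nonempty X] : Nonempty (FinDist X) :=
  ⟨finDistPure (Classical.arbitrary X)⟩

instance simplex_nonempty {Sig : Type} [Fintype Sig] [Nonempty Sig] :
    Nonempty {π : Sig → ℝ // π ∈ stdSimplex ℝ Sig} :=
  ⟨⟨deltaPt (Classical.arbitrary Sig), deltaPt_mem _⟩⟩

variable {K : ℕ} {Sig Obs : Type} [Fintype Sig] [Fintype Obs] [Nonempty Sig]
variable {Dev : Fin K → Type} [∀ k, Fintype (Dev k)] [∀ k, Nonempty (Dev k)]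
variable {γ : ℝ} {Models : Set (Sig → Obs → ℝ)} {reward : Fin K → Obs → ℝ}
  {Sw : ∀ k, Dev k → (Sig → ℝ) → (Sig → ℝ)}

lemma hgap0co
    (hNonneg : ∀ Mb ∈ coModels Models, ∀ k : Fin K, ∀ π ∈ stdSimplex ℝ Sig,
      0 ≤ (⨆ d : Dev k, fmix Mb reward k (Sw k d π)) - fmix Mb reward k π)
    {M : Sig → Obs → ℝ} (hM : M ∈ coModels Models) {π : Sig → ℝ}
    (hπ : π ∈ stdSimplex ℝ Sig) : 0 ≤ hgap Sw reward M π :=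
  sum_nonneg fun k _ => hNonneg M hM k π hπ

section DEC

variable (hγ : 0 ≤ γ)
  (hreward : ∀ k o, reward k o ∈ Set.Icc (0:ℝ) 1)
  (hModels : ∀ M ∈ Models, ∀ σ, M σ ∈ stdSimplex ℝ Obs)
  (hSw : ∀ k d π, π ∈ stdSimplex ℝ Sig → Sw k d π ∈ stdSimplex ℝ Sig)
  (hNonneg : ∀ Mb ∈ coModels Models, ∀ k : Fin K, ∀ π ∈ stdSimplex ℝ Sig,
      0 ≤ (⨆ d : Dev k, fmix Mb reward k (Sw k d π)) - fmix Mb reward k π)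
  (hne : Models.Nonempty)

include hγ hreward hModels hSw in
lemma bddAbove_Ep (p : FinDist {π : Sig → ℝ // π ∈ stdSimplex ℝ Sig})
    (Mb : Sig → Obs → ℝ) :
    BddAbove (Set.range fun M : coModels Models => Ep γ reward Sw p M.1 Mb) := by
  refine ⟨K, ?_⟩
  rintro x ⟨M, rfl⟩
  exact Ep_le_K hγ hreward hSw (coModels_rows hModels M.1 M.2) p

include hγ hreward hModels hSw in
lemma iSup_Ep_le_K (p : FinDist {π : Sig → ℝ // π ∈ stdSimplex ℝ Sig})
    (Mb : Sig → Obs → ℝ) :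
    (⨆ M : coModels Models, Ep γ reward Sw p M.1 Mb) ≤ K :=
  Real.iSup_le (fun M => Ep_le_K hγ hreward hSw (coModels_rows hModels M.1 M.2) p)
    (Nat.cast_nonneg K)

include hγ hreward hModels hSw hNonneg in
lemma neg_le_iSup_Ep (p : FinDist {π : Sig → ℝ // π ∈ stdSimplex ℝ Sig}) (Mb : coModels Models) :
    -(2*γ) ≤ ⨆ M : coModels Models, Ep γ reward Sw p M.1 Mb.1 := by
  refine le_trans ?_ (le_ciSup (bddAbove_Ep hγ hreward hModels hSw p Mb.1) Mb)
  exact neg_le_Ep hγ (coModels_rows hModels Mb.1 Mb.2) (coModels_rows hModels Mb.1 Mb.2)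
    (fun π hπ => hgap0co hNonneg Mb.2 hπ) p

include hγ hreward hModels hSw hNonneg in
lemma D_le_dec (Mb : coModels Models) :
    (⨅ p : FinDist {π : Sig → ℝ // π ∈ stdSimplex ℝ Sig},
        ⨆ M : coModels Models, Ep γ reward Sw p M.1 Mb.1)
      ≤ decoregCo γ Models reward Sw := by
  rw [decoregCo_def]
  refine le_ciSup (f := fun Mb : coModels Models =>
    ⨅ p : FinDist {π : Sig → ℝ // π ∈ stdSimplex ℝ Sig},
        ⨆ M : coModels Models, Ep γ reward Sw p M.1 Mb.1) ?_ Mb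
  refine ⟨K, ?_⟩
  rintro x ⟨Mb', rfl⟩
  refine le_trans (ciInf_le ?_ (Classical.arbitrary _)) (iSup_Ep_le_K hγ hreward hModels hSw _ _)
  refine ⟨-(2*γ), ?_⟩
  rintro y ⟨p, rfl⟩
  exact neg_le_iSup_Ep hγ hreward hModels hSw hNonneg p Mb'
  
include hγ hreward hModels hSw hNonneg in
lemma dec_nonneg (hne : Models.Nonempty) : 0 ≤ decoregCo γ Models reward Sw := by
  obtain ⟨M₀, hM₀⟩ := hne
  have hM₀co : M₀ ∈ coModels Models := mem_coModels_self hM₀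
  refine le_trans ?_ (D_le_dec hγ hreward hModels hSw hNonneg ⟨M₀, hM₀co⟩)
  refine le_ciInf fun p => ?_
  refine le_trans ?_ (le_ciSup (bddAbove_Ep hγ hreward hModels hSw p M₀) ⟨M₀, hM₀co⟩)
  refine finDist_weighted_ge p _ _ fun π _ => ?_
  rw [hellSq_self]
  have := hgap0co hNonneg hM₀co π.2
  nlinarith

end DEC
end Helpers7
section Helpers8
set_option linter.unusedSectionVars false
set_option linter.unusedVariables false

open Finset

lemma hell_point_eq {N Pv nu : ℝ} (hN : 0 ≤ N) (hPv : 0 ≤ Pv) (hnu : 0 ≤ nu)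
    (h0 : Pv = 0 → N = 0) :
    Pv * (Real.sqrt (N / Pv) - Real.sqrt nu) ^ 2
      = (Real.sqrt N - Real.sqrt (nu * Pv)) ^ 2 := by
  by_cases h : Pv = 0
  · simp [h, h0 h]
  · have hpos : 0 < Pv := lt_of_le_of_ne hPv (Ne.symm h)
    have hsq : Real.sqrt Pv ^ 2 = Pv := Real.sq_sqrt hPv
    have hsne : Real.sqrt Pv ≠ 0 := by positivity
    have hinner : Real.sqrt Pv * (Real.sqrt N / Real.sqrt Pv - Real.sqrt nu)
        = Real.sqrt N - Real.sqrt nu * Real.sqrt Pv := by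
      field_simp
    calc Pv * (Real.sqrt (N / Pv) - Real.sqrt nu) ^ 2
        = Real.sqrt Pv ^ 2 * (Real.sqrt N / Real.sqrt Pv - Real.sqrt nu) ^ 2 := by
          rw [hsq, Real.sqrt_div hN]
      _ = (Real.sqrt Pv * (Real.sqrt N / Real.sqrt Pv - Real.sqrt nu)) ^ 2 :=
          (mul_pow _ _ 2).symm
      _ = (Real.sqrt N - Real.sqrt nu * Real.sqrt Pv) ^ 2 := by rw [hinner]
      _ = (Real.sqrt N - Real.sqrt (nu * Pv)) ^ 2 := by rw [Real.sqrt_mul hnu]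

variable {K : ℕ} {Sig Obs : Type} [Fintype Sig] [Fintype Obs]
variable {Dev : Fin K → Type} [∀ k, Fintype (Dev k)]

/-- The mean model `M̄` of `μ` (equal to `obsProb`). -/
noncomputable def PF (Models : Set (Sig → Obs → ℝ)) (μ : FinDist (↥Models × ∀ k, Dev k)) :
    Sig → Obs → ℝ :=
  fun σ o => ∑ x ∈ μ.1.support, μ.1 x * x.1.1 σ o

/-- The unnormalized conditional model given `π*_k = d`. -/
noncomputable def NumF (Models : Set (Sig → Obs → ℝ)) (μ : FinDist (↥Models × ∀ k, Dev k))
    (k : Fin K) (d : Dev k) : Sig → Obs → ℝ :=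
  fun σ o => ∑ x ∈ μ.1.support, (if x.2 k = d then μ.1 x else 0) * x.1.1 σ o

/-- The normalized conditional model given `π*_k = d`. -/
noncomputable def MkdF (Models : Set (Sig → Obs → ℝ)) (μ : FinDist (↥Models × ∀ k, Dev k))
    (M₀ : Sig → Obs → ℝ) (k : Fin K) (d : Dev k) : Sig → Obs → ℝ :=
  if priorDist Models μ k d = 0 then M₀
  else fun σ o => NumF Models μ k d σ o / priorDist Models μ k d

variable {Models : Set (Sig → Obs → ℝ)} (μ : FinDist (↥Models × ∀ k, Dev k))

lemma obsProb_eq (σ : Sig) (o : Obs) : obsProb Models μ σ o = PF Models μ σ o :=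
  finsupp_sum_eq μ.1 _

lemma priorDist_eq (k : Fin K) (d : Dev k) :
    priorDist Models μ k d = ∑ x ∈ μ.1.support, if x.2 k = d then μ.1 x else 0 :=
  finsupp_sum_eq μ.1 _

lemma postDist_eq (k : Fin K) (σ : Sig) (o : Obs) :
    postDist Models μ k σ o = fun d => NumF Models μ k d σ o / PF Models μ σ o := by
  funext d
  unfold postDist
  rw [obsProb_eq]
  congr 1
  rw [finsupp_sum_eq]
  unfold NumF
  refine Finset.sum_congr rfl fun x _ => ?_
  rw [ite_mul, zero_mul]

lemma prior_nonneg (k : Fin K) (d : Dev k) : 0 ≤ priorDist Models μ k d := by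
  rw [priorDist_eq]
  refine sum_nonneg fun x _ => ?_
  split
  · exact μ.2.1 x
  · exact le_refl 0

lemma prior_sum (k : Fin K) : ∑ d, priorDist Models μ k d = 1 := by
  have h1 : ∀ d, priorDist Models μ k d = ∑ x ∈ μ.1.support, if x.2 k = d then μ.1 x else 0 :=
    priorDist_eq μ k
  rw [Finset.sum_congr rfl fun d _ => h1 d, Finset.sum_comm]
  have h2 : ∀ x ∈ μ.1.support, (∑ d, if x.2 k = d then μ.1 x else 0) = μ.1 x := by
    intro x _
    rw [Finset.sum_ite_eq]
    simp
  rw [Finset.sum_congr rfl h2]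
  exact finDist_suppsum μ

lemma PF_nonneg (hModels : ∀ M ∈ Models, ∀ σ, M σ ∈ stdSimplex ℝ Obs) (σ : Sig) (o : Obs) :
    0 ≤ PF Models μ σ o :=
  sum_nonneg fun x _ => mul_nonneg (μ.2.1 x) ((hModels x.1.1 x.1.2 σ).1 o)

lemma NumF_nonneg (hModels : ∀ M ∈ Models, ∀ σ, M σ ∈ stdSimplex ℝ Obs)
    (k : Fin K) (d : Dev k) (σ : Sig) (o : Obs) : 0 ≤ NumF Models μ k d σ o := by
  refine sum_nonneg fun x _ => mul_nonneg ?_ ((hModels x.1.1 x.1.2 σ).1 o)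
  split
  · exact μ.2.1 x
  · exact le_refl 0

lemma NumF_le_PF (hModels : ∀ M ∈ Models, ∀ σ, M σ ∈ stdSimplex ℝ Obs)
    (k : Fin K) (d : Dev k) (σ : Sig) (o : Obs) :
    NumF Models μ k d σ o ≤ PF Models μ σ o := by
  refine Finset.sum_le_sum fun x _ => ?_
  have hM : 0 ≤ x.1.1 σ o := (hModels x.1.1 x.1.2 σ).1 o
  split
  · exact le_refl _
  · rw [zero_mul]; exact mul_nonneg (μ.2.1 x) hM

lemma NumF_sum_d (k : Fin K) (σ : Sig) (o : Obs) :
    ∑ d, NumF Models μ k d σ o = PF Models μ σ o := by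
  unfold NumF PF
  rw [Finset.sum_comm]
  refine Finset.sum_congr rfl fun x _ => ?_
  rw [← Finset.sum_mul, Finset.sum_ite_eq]
  simp

lemma NumF_sum_o (hModels : ∀ M ∈ Models, ∀ σ, M σ ∈ stdSimplex ℝ Obs)
    (k : Fin K) (d : Dev k) (σ : Sig) :
    ∑ o, NumF Models μ k d σ o = priorDist Models μ k d := by
  unfold NumF
  rw [Finset.sum_comm, priorDist_eq]
  refine Finset.sum_congr rfl fun x _ => ?_
  rw [← Finset.mul_sum, (hModels x.1.1 x.1.2 σ).2, mul_one]

lemma PF_sum_o (hModels : ∀ M ∈ Models, ∀ σ, M σ ∈ stdSimplex ℝ Obs) (σ : Sig) :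
    ∑ o, PF Models μ σ o = 1 := by
  unfold PF
  rw [Finset.sum_comm]
  have h : ∀ x ∈ μ.1.support, ∑ o, μ.1 x * x.1.1 σ o = μ.1 x := by
    intro x _
    rw [← Finset.mul_sum, (hModels x.1.1 x.1.2 σ).2, mul_one]
  rw [Finset.sum_congr rfl h]
  exact finDist_suppsum μ

lemma PF_zero_Num (hModels : ∀ M ∈ Models, ∀ σ, M σ ∈ stdSimplex ℝ Obs)
    (k : Fin K) (d : Dev k) (σ : Sig) (o : Obs) (h : PF Models μ σ o = 0) :
    NumF Models μ k d σ o = 0 :=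
  le_antisymm (h ▸ NumF_le_PF μ hModels k d σ o) (NumF_nonneg μ hModels k d σ o)

lemma NumF_eq_prior_mul_Mkd (M₀ : Sig → Obs → ℝ) (k : Fin K) (d : Dev k) (σ : Sig) (o : Obs) :
    NumF Models μ k d σ o = priorDist Models μ k d * MkdF Models μ M₀ k d σ o := by
  unfold MkdF
  by_cases h : priorDist Models μ k d = 0
  · rw [if_pos h, h, zero_mul]
    have h2 : ∀ x ∈ μ.1.support, (if x.2 k = d then μ.1 x else 0) = 0 := by
      rw [priorDist_eq] at h
      intro x hx
      refine (Finset.sum_eq_zero_iff_of_nonneg fun y _ => ?_).1 h x hx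
      split
      · exact μ.2.1 y
      · exact le_refl 0
    unfold NumF
    refine Finset.sum_eq_zero fun x hx => ?_
    rw [h2 x hx, zero_mul]
  · rw [if_neg h, mul_div_cancel₀ _ h]

lemma MkdF_mem_co (hModels : ∀ M ∈ Models, ∀ σ, M σ ∈ stdSimplex ℝ Obs)
    (M₀ : Sig → Obs → ℝ) (hM₀ : M₀ ∈ Models) (k : Fin K) (d : Dev k) :
    MkdF Models μ M₀ k d ∈ coModels Models := by
  unfold MkdF
  by_cases h : priorDist Models μ k d = 0
  · rw [if_pos h]; exact mem_coModels_self hM₀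
  · rw [if_neg h]
    have hν := prior_nonneg μ k d
    have heq : (fun σ o => NumF Models μ k d σ o / priorDist Models μ k d)
        = fun σ o => ∑ x ∈ μ.1.support,
            ((if x.2 k = d then μ.1 x else 0) / priorDist Models μ k d) * x.1.1 σ o := by
      funext σ o
      unfold NumF
      rw [Finset.sum_div]
      refine Finset.sum_congr rfl fun x _ => ?_
      rw [div_mul_eq_mul_div]
    rw [heq]
    refine mix_mem_coModels Models _ _ _ (fun y _ => ?_) ?_ (fun y _ => y.1.2)
    · refine div_nonneg ?_ hν
      split
      · exact μ.2.1 y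
      · exact le_refl 0
    · rw [← Finset.sum_div, ← priorDist_eq, div_self h]

end Helpers8
section Helpers9
set_option linter.unusedSectionVars false
set_option linter.unusedVariables false

open Finset

variable {K : ℕ} {Sig Obs : Type} [Fintype Sig] [Fintype Obs]
variable {Dev : Fin K → Type} [∀ k, Fintype (Dev k)]
variable {Models : Set (Sig → Obs → ℝ)} {reward : Fin K → Obs → ℝ}
  {Sw : ∀ k, Dev k → (Sig → ℝ) → (Sig → ℝ)}

lemma gain_le
    (hModels : ∀ M ∈ Models, ∀ σ, M σ ∈ stdSimplex ℝ Obs)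
    (hAffine : ∀ M ∈ Models, ∀ (k : Fin K) (d : Dev k),
      ∀ π₁ π₂ : Sig → ℝ,
        π₁ ∈ stdSimplex ℝ Sig → π₂ ∈ stdSimplex ℝ Sig →
        ∀ t : ℝ, 0 ≤ t → t ≤ 1 →
          fmix M reward k (Sw k d fun σ => t * π₁ σ + (1 - t) * π₂ σ) =
            t * fmix M reward k (Sw k d π₁) + (1 - t) * fmix M reward k (Sw k d π₂))
    (hNonneg : ∀ Mb ∈ coModels Models, ∀ k : Fin K, ∀ π ∈ stdSimplex ℝ Sig,
      0 ≤ (⨆ d : Dev k, fmix Mb reward k (Sw k d π)) - fmix Mb reward k π)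
    {M₀ : Sig → Obs → ℝ} (hM₀ : M₀ ∈ Models)
    (μ : FinDist (↥Models × ∀ k, Dev k)) (q : Sig → ℝ) (hq : q ∈ stdSimplex ℝ Sig) :
    (∑ σ, q σ * ∑ x ∈ μ.1.support, μ.1 x *
        ∑ k, (fmix x.1.1 reward k (Sw k (x.2 k) (deltaPt σ)) - fpure x.1.1 reward k σ))
      ≤ ∑ k, ∑ d, priorDist Models μ k d * hgap Sw reward (MkdF Models μ M₀ k d) q := by
  classical
  set S := μ.1.support with hS
  -- Step A: rewrite LHS using affinity
  have hA : (∑ σ, q σ * ∑ x ∈ S, μ.1 x *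
        ∑ k, (fmix x.1.1 reward k (Sw k (x.2 k) (deltaPt σ)) - fpure x.1.1 reward k σ))
      = ∑ x ∈ S, μ.1 x *
          ∑ k, (fmix x.1.1 reward k (Sw k (x.2 k) q) - fmix x.1.1 reward k q) := by
    have h1 : (∑ σ, q σ * ∑ x ∈ S, μ.1 x *
          ∑ k, (fmix x.1.1 reward k (Sw k (x.2 k) (deltaPt σ)) - fpure x.1.1 reward k σ))
        = ∑ x ∈ S, ∑ σ, q σ * (μ.1 x *
            ∑ k, (fmix x.1.1 reward k (Sw k (x.2 k) (deltaPt σ)) - fpure x.1.1 reward k σ)) := by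
      rw [← Finset.sum_comm]
      exact Finset.sum_congr rfl fun σ _ => Finset.mul_sum _ _ _
    rw [h1]
    refine Finset.sum_congr rfl fun x _ => ?_
    have h2 : ∀ σ, q σ * (μ.1 x *
          ∑ k, (fmix x.1.1 reward k (Sw k (x.2 k) (deltaPt σ)) - fpure x.1.1 reward k σ))
        = μ.1 x * ∑ k, (q σ * fmix x.1.1 reward k (Sw k (x.2 k) (deltaPt σ))
            - q σ * fpure x.1.1 reward k σ) := by
      intro σ
      simp only [Finset.mul_sum]
      exact Finset.sum_congr rfl fun k _ => by ring
    rw [Finset.sum_congr rfl fun σ _ => h2 σ, ← Finset.mul_sum]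
    congr 1
    rw [Finset.sum_comm]
    refine Finset.sum_congr rfl fun k _ => ?_
    rw [Finset.sum_sub_distrib]
    congr 1
    · exact (affine_vertex (fun π => fmix x.1.1 reward k (Sw k (x.2 k) π))
        (fun π₁ π₂ h1 h2 t ht0 ht1 => hAffine x.1.1 x.1.2 k (x.2 k) π₁ π₂ h1 h2 t ht0 ht1)
        q hq).symm
  rw [hA]
  -- Step B: swap the k-sum out
  have hB : (∑ x ∈ S, μ.1 x *
        ∑ k, (fmix x.1.1 reward k (Sw k (x.2 k) q) - fmix x.1.1 reward k q))
      = ∑ k, ∑ x ∈ S, μ.1 x * (fmix x.1.1 reward k (Sw k (x.2 k) q) - fmix x.1.1 reward k q) := by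
    rw [← Finset.sum_comm]
    exact Finset.sum_congr rfl fun x _ => Finset.mul_sum _ _ _
  rw [hB]
  refine Finset.sum_le_sum fun k _ => ?_
  -- Step C: group by deviation
  have hC : (∑ x ∈ S, μ.1 x * (fmix x.1.1 reward k (Sw k (x.2 k) q) - fmix x.1.1 reward k q))
      = ∑ d, (fmix (NumF Models μ k d) reward k (Sw k d q)
          - fmix (NumF Models μ k d) reward k q) := by
    have h1 : ∀ x ∈ S, μ.1 x * (fmix x.1.1 reward k (Sw k (x.2 k) q) - fmix x.1.1 reward k q)
        = ∑ d, ((if x.2 k = d then μ.1 x else 0) * fmix x.1.1 reward k (Sw k d q)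
            - (if x.2 k = d then μ.1 x else 0) * fmix x.1.1 reward k q) := by
      intro x _
      have h2 : ∀ d : Dev k, ((if x.2 k = d then μ.1 x else 0) * fmix x.1.1 reward k (Sw k d q)
            - (if x.2 k = d then μ.1 x else 0) * fmix x.1.1 reward k q)
          = if x.2 k = d then
              μ.1 x * (fmix x.1.1 reward k (Sw k d q) - fmix x.1.1 reward k q) else 0 := by
        intro d
        split
        · ring
        · ring
      rw [Finset.sum_congr rfl fun d _ => h2 d, Finset.sum_ite_eq]
      simp
    rw [Finset.sum_congr rfl h1, Finset.sum_comm]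
    refine Finset.sum_congr rfl fun d _ => ?_
    rw [Finset.sum_sub_distrib]
    congr 1
    · exact (fmix_sum_kernel S (fun x => if x.2 k = d then μ.1 x else 0)
        (fun x => x.1.1) reward k (Sw k d q)).symm
    · exact (fmix_sum_kernel S (fun x => if x.2 k = d then μ.1 x else 0)
        (fun x => x.1.1) reward k q).symm
  rw [hC]
  -- Step D: per-deviation bound
  refine Finset.sum_le_sum fun d _ => ?_
  have hNum : NumF Models μ k d = fun σ o =>
      priorDist Models μ k d * MkdF Models μ M₀ k d σ o := by
    funext σ o; exact NumF_eq_prior_mul_Mkd μ M₀ k d σ o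
  rw [hNum, fmix_smul_kernel, fmix_smul_kernel, ← mul_sub]
  refine mul_le_mul_of_nonneg_left ?_ (prior_nonneg μ k d)
  have hco : MkdF Models μ M₀ k d ∈ coModels Models := MkdF_mem_co μ hModels M₀ hM₀ k d
  have h1 : fmix (MkdF Models μ M₀ k d) reward k (Sw k d q)
      ≤ ⨆ d' : Dev k, fmix (MkdF Models μ M₀ k d) reward k (Sw k d' q) :=
    le_ciSup (f := fun d' : Dev k => fmix (MkdF Models μ M₀ k d) reward k (Sw k d' q))
      (Set.Finite.bddAbove (Set.finite_range _)) d
  have h2 : ((⨆ d' : Dev k, fmix (MkdF Models μ M₀ k d) reward k (Sw k d' q))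
        - fmix (MkdF Models μ M₀ k d) reward k q)
      ≤ hgap Sw reward (MkdF Models μ M₀ k d) q := by
    unfold hgap
    exact Finset.single_le_sum (f := fun k' =>
      (⨆ d' : Dev k', fmix (MkdF Models μ M₀ k d) reward k' (Sw k' d' q))
        - fmix (MkdF Models μ M₀ k d) reward k' q)
      (fun k' _ => hNonneg _ hco k' q hq) (mem_univ k)
  linarith

end Helpers9
section Helpers10
set_option linter.unusedSectionVars false
set_option linter.unusedVariables false

open Finset

variable {K : ℕ} {Sig Obs : Type} [Fintype Sig] [Fintype Obs]
variable {Dev : Fin K → Type} [∀ k, Fintype (Dev k)]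
variable {Models : Set (Sig → Obs → ℝ)} {reward : Fin K → Obs → ℝ}
  {Sw : ∀ k, Dev k → (Sig → ℝ) → (Sig → ℝ)}

lemma info_ge
    (hModels : ∀ M ∈ Models, ∀ σ, M σ ∈ stdSimplex ℝ Obs)
    {M₀ : Sig → Obs → ℝ} (hM₀ : M₀ ∈ Models)
    (μ : FinDist (↥Models × ∀ k, Dev k)) (q : Sig → ℝ) (hq : q ∈ stdSimplex ℝ Sig) :
    (∑ k, ∑ d, priorDist Models μ k d *
        hellSq (obsAt (MkdF Models μ M₀ k d) q) (obsAt (PF Models μ) q))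
      ≤ ∑ σ, q σ * ∑ o, PF Models μ σ o *
          ∑ k, hellSq (postDist Models μ k σ o) (priorDist Models μ k) := by
  classical
  have hMrows : ∀ (k : Fin K) (d : Dev k), ∀ σ, MkdF Models μ M₀ k d σ ∈ stdSimplex ℝ Obs :=
    fun k d => coModels_rows hModels _ (MkdF_mem_co μ hModels M₀ hM₀ k d)
  have hProws : ∀ σ, PF Models μ σ ∈ stdSimplex ℝ Obs := by
    have hco : PF Models μ ∈ coModels Models := by
      unfold PF
      exact mix_mem_coModels Models _ _ _ (fun y _ => μ.2.1 y) (finDist_suppsum μ)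
        (fun y _ => y.1.2)
    exact coModels_rows hModels _ hco
  -- identity: expected posterior Hellinger = mixture Hellinger, per σ and k
  have hident : ∀ (k : Fin K) (σ : Sig),
      (∑ o, PF Models μ σ o * hellSq (postDist Models μ k σ o) (priorDist Models μ k))
        = ∑ d, ∑ o, (Real.sqrt (NumF Models μ k d σ o)
            - Real.sqrt (priorDist Models μ k d * PF Models μ σ o)) ^ 2 := by
    intro k σ
    have h1 : ∀ o, PF Models μ σ o * hellSq (postDist Models μ k σ o) (priorDist Models μ k)
        = ∑ d, (Real.sqrt (NumF Models μ k d σ o)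
            - Real.sqrt (priorDist Models μ k d * PF Models μ σ o)) ^ 2 := by
      intro o
      rw [postDist_eq]
      unfold hellSq
      rw [Finset.mul_sum]
      refine Finset.sum_congr rfl fun d _ => ?_
      exact hell_point_eq (NumF_nonneg μ hModels k d σ o) (PF_nonneg μ hModels σ o)
        (prior_nonneg μ k d) (PF_zero_Num μ hModels k d σ o)
    rw [Finset.sum_congr rfl fun o _ => h1 o, Finset.sum_comm]
  -- per-deviation convexity bound
  have hd : ∀ (k : Fin K) (d : Dev k),
      priorDist Models μ k d * hellSq (obsAt (MkdF Models μ M₀ k d) q) (obsAt (PF Models μ) q)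
        ≤ ∑ σ, q σ * ∑ o, (Real.sqrt (NumF Models μ k d σ o)
            - Real.sqrt (priorDist Models μ k d * PF Models μ σ o)) ^ 2 := by
    intro k d
    set ν := priorDist Models μ k d with hν
    have hν0 : 0 ≤ ν := prior_nonneg μ k d
    have hstep1 : ν * hellSq (obsAt (MkdF Models μ M₀ k d) q) (obsAt (PF Models μ) q)
        = ∑ o, (Real.sqrt (∑ σ, q σ * NumF Models μ k d σ o)
            - Real.sqrt (∑ σ, q σ * (ν * PF Models μ σ o))) ^ 2 := by
      unfold hellSq
      rw [Finset.mul_sum]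
      refine Finset.sum_congr rfl fun o _ => ?_
      have hA : 0 ≤ obsAt (MkdF Models μ M₀ k d) q o :=
        obsAt_nonneg (hMrows k d) (fun σ => hq.1 σ) o
      have hB : 0 ≤ obsAt (PF Models μ) q o :=
        obsAt_nonneg hProws (fun σ => hq.1 σ) o
      have e1 : ν * obsAt (MkdF Models μ M₀ k d) q o = ∑ σ, q σ * NumF Models μ k d σ o := by
        unfold obsAt
        rw [Finset.mul_sum]
        refine Finset.sum_congr rfl fun σ _ => ?_
        rw [NumF_eq_prior_mul_Mkd μ M₀ k d σ o, ← hν]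
        ring
      have e2 : ν * obsAt (PF Models μ) q o = ∑ σ, q σ * (ν * PF Models μ σ o) := by
        unfold obsAt
        rw [Finset.mul_sum]
        exact Finset.sum_congr rfl fun σ _ => by ring
      rw [← sqrt_sub_sq_scale hν0 hA hB, e1, e2]
    rw [hstep1]
    have hstep2 : ∀ o, (Real.sqrt (∑ σ, q σ * NumF Models μ k d σ o)
          - Real.sqrt (∑ σ, q σ * (ν * PF Models μ σ o))) ^ 2
        ≤ ∑ σ, q σ * (Real.sqrt (NumF Models μ k d σ o)
            - Real.sqrt (ν * PF Models μ σ o)) ^ 2 := by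
      intro o
      exact sqrt_comb_le q (fun σ => NumF Models μ k d σ o)
        (fun σ => ν * PF Models μ σ o) (fun σ => hq.1 σ)
        (fun σ => NumF_nonneg μ hModels k d σ o)
        (fun σ => mul_nonneg hν0 (PF_nonneg μ hModels σ o))
    calc ∑ o, (Real.sqrt (∑ σ, q σ * NumF Models μ k d σ o)
          - Real.sqrt (∑ σ, q σ * (ν * PF Models μ σ o))) ^ 2
        ≤ ∑ o, ∑ σ, q σ * (Real.sqrt (NumF Models μ k d σ o)
            - Real.sqrt (ν * PF Models μ σ o)) ^ 2 :=
          Finset.sum_le_sum fun o _ => hstep2 o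
      _ = ∑ σ, ∑ o, q σ * (Real.sqrt (NumF Models μ k d σ o)
            - Real.sqrt (ν * PF Models μ σ o)) ^ 2 := Finset.sum_comm
      _ = ∑ σ, q σ * ∑ o, (Real.sqrt (NumF Models μ k d σ o)
            - Real.sqrt (ν * PF Models μ σ o)) ^ 2 :=
          Finset.sum_congr rfl fun σ _ => (Finset.mul_sum _ _ _).symm
  -- assemble
  calc (∑ k, ∑ d, priorDist Models μ k d *
        hellSq (obsAt (MkdF Models μ M₀ k d) q) (obsAt (PF Models μ) q))
      ≤ ∑ k, ∑ d : Dev k, ∑ σ, q σ * ∑ o, (Real.sqrt (NumF Models μ k d σ o)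
          - Real.sqrt (priorDist Models μ k d * PF Models μ σ o)) ^ 2 :=
        Finset.sum_le_sum fun k _ => Finset.sum_le_sum fun d _ => hd k d
    _ = ∑ k, ∑ σ, q σ * ∑ d : Dev k, ∑ o, (Real.sqrt (NumF Models μ k d σ o)
          - Real.sqrt (priorDist Models μ k d * PF Models μ σ o)) ^ 2 := by
        refine Finset.sum_congr rfl fun k _ => ?_
        rw [Finset.sum_comm]
        refine Finset.sum_congr rfl fun σ _ => ?_
        rw [Finset.mul_sum]
    _ = ∑ k, ∑ σ, q σ * ∑ o, PF Models μ σ o *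
          hellSq (postDist Models μ k σ o) (priorDist Models μ k) := by
        refine Finset.sum_congr rfl fun k _ => Finset.sum_congr rfl fun σ _ => ?_
        rw [hident k σ]
    _ = ∑ σ, q σ * ∑ o, PF Models μ σ o *
          ∑ k, hellSq (postDist Models μ k σ o) (priorDist Models μ k) := by
        rw [Finset.sum_comm]
        refine Finset.sum_congr rfl fun σ _ => ?_
        have h1 : ∑ o, PF Models μ σ o *
            ∑ k, hellSq (postDist Models μ k σ o) (priorDist Models μ k)
            = ∑ o, ∑ k, PF Models μ σ o *
                hellSq (postDist Models μ k σ o) (priorDist Models μ k) :=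
          Finset.sum_congr rfl fun o _ => Finset.mul_sum _ _ _
        calc ∑ k, q σ * ∑ o, PF Models μ σ o *
              hellSq (postDist Models μ k σ o) (priorDist Models μ k)
            = q σ * ∑ k, ∑ o, PF Models μ σ o *
                hellSq (postDist Models μ k σ o) (priorDist Models μ k) :=
              (Finset.mul_sum _ _ _).symm
          _ = q σ * ∑ o, ∑ k, PF Models μ σ o *
                hellSq (postDist Models μ k σ o) (priorDist Models μ k) := by
              rw [Finset.sum_comm]
          _ = q σ * ∑ o, PF Models μ σ o *
                ∑ k, hellSq (postDist Models μ k σ o) (priorDist Models μ k) := by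
              rw [← h1]

end Helpers10
section Helpers11
set_option linter.unusedSectionVars false
set_option linter.unusedVariables false

open Finset

lemma finDist_weighted_smul {X : Type*} (p : FinDist X) (c : ℝ) (f : X → ℝ) :
    (p.1.sum fun x v => v * (c * f x)) = c * p.1.sum fun x v => v * f x := by
  rw [finsupp_sum_eq, finsupp_sum_eq, Finset.mul_sum]
  exact Finset.sum_congr rfl fun x _ => by ring

variable {K : ℕ} {Sig Obs : Type} [Fintype Sig] [Fintype Obs] [Nonempty Sig]
variable {Dev : Fin K → Type} [∀ k, Fintype (Dev k)] [∀ k, Nonempty (Dev k)]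
variable {Models : Set (Sig → Obs → ℝ)} {reward : Fin K → Obs → ℝ}
  {Sw : ∀ k, Dev k → (Sig → ℝ) → (Sig → ℝ)} {γ : ℝ}

lemma key_mu (hK : 0 < K) (hγ : 0 < γ)
    (hreward : ∀ k o, reward k o ∈ Set.Icc (0:ℝ) 1)
    (hModels : ∀ M ∈ Models, ∀ σ, M σ ∈ stdSimplex ℝ Obs)
    (hSw : ∀ k d π, π ∈ stdSimplex ℝ Sig → Sw k d π ∈ stdSimplex ℝ Sig)
    (hAffine : ∀ M ∈ Models, ∀ (k : Fin K) (d : Dev k),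
      ∀ π₁ π₂ : Sig → ℝ,
        π₁ ∈ stdSimplex ℝ Sig → π₂ ∈ stdSimplex ℝ Sig →
        ∀ t : ℝ, 0 ≤ t → t ≤ 1 →
          fmix M reward k (Sw k d fun σ => t * π₁ σ + (1 - t) * π₂ σ) =
            t * fmix M reward k (Sw k d π₁) + (1 - t) * fmix M reward k (Sw k d π₂))
    (hNonneg : ∀ Mb ∈ coModels Models, ∀ k : Fin K, ∀ π ∈ stdSimplex ℝ Sig,
      0 ≤ (⨆ d : Dev k, fmix Mb reward k (Sw k d π)) - fmix Mb reward k π)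
    (hne : Models.Nonempty)
    (μ : FinDist (↥Models × ∀ k, Dev k)) :
    (⨅ π : {π : Sig → ℝ // π ∈ stdSimplex ℝ Sig},
      (μ.1.sum fun Mp v => v * ∑ σ, π.1 σ *
          ∑ k, (fmix Mp.1.1 reward k (Sw k (Mp.2 k) (deltaPt σ)) -
                  fpure Mp.1.1 reward k σ))
        - γ * ∑ σ, π.1 σ * ∑ o, obsProb Models μ σ o *
            ∑ k, hellSq (postDist Models μ k σ o) (priorDist Models μ k))
      ≤ K * decoregCo γ Models reward Sw := by
  classical
  obtain ⟨M₀, hM₀⟩ := hne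
  -- abbreviations
  set g : Sig → ℝ := fun σ =>
    (∑ x ∈ μ.1.support, μ.1 x *
        ∑ k, (fmix x.1.1 reward k (Sw k (x.2 k) (deltaPt σ)) - fpure x.1.1 reward k σ))
      - γ * ∑ o, PF Models μ σ o *
          ∑ k, hellSq (postDist Models μ k σ o) (priorDist Models μ k) with hg
  -- the objective is linear in π
  have hbody : ∀ π : {π : Sig → ℝ // π ∈ stdSimplex ℝ Sig},
      ((μ.1.sum fun Mp v => v * ∑ σ, π.1 σ *
          ∑ k, (fmix Mp.1.1 reward k (Sw k (Mp.2 k) (deltaPt σ)) -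
                  fpure Mp.1.1 reward k σ))
        - γ * ∑ σ, π.1 σ * ∑ o, obsProb Models μ σ o *
            ∑ k, hellSq (postDist Models μ k σ o) (priorDist Models μ k))
      = ∑ σ, π.1 σ * g σ := by
    intro π
    have h1 : (μ.1.sum fun Mp v => v * ∑ σ, π.1 σ *
          ∑ k, (fmix Mp.1.1 reward k (Sw k (Mp.2 k) (deltaPt σ)) -
                  fpure Mp.1.1 reward k σ))
        = ∑ σ, π.1 σ * ∑ x ∈ μ.1.support, μ.1 x *
            ∑ k, (fmix x.1.1 reward k (Sw k (x.2 k) (deltaPt σ)) - fpure x.1.1 reward k σ) := by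
      rw [finsupp_sum_eq]
      have h2 : ∀ x ∈ μ.1.support, μ.1 x * ∑ σ, π.1 σ *
            ∑ k, (fmix x.1.1 reward k (Sw k (x.2 k) (deltaPt σ)) - fpure x.1.1 reward k σ)
          = ∑ σ, π.1 σ * (μ.1 x *
              ∑ k, (fmix x.1.1 reward k (Sw k (x.2 k) (deltaPt σ)) - fpure x.1.1 reward k σ)) := by
        intro x _
        rw [Finset.mul_sum]
        exact Finset.sum_congr rfl fun σ _ => by ring
      rw [Finset.sum_congr rfl h2, Finset.sum_comm]
      exact Finset.sum_congr rfl fun σ _ => (Finset.mul_sum _ _ _).symm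
    have h3 : ∀ σ o, obsProb Models μ σ o = PF Models μ σ o := obsProb_eq μ
    rw [h1]
    simp only [h3]
    rw [Finset.mul_sum, ← Finset.sum_sub_distrib]
    refine Finset.sum_congr rfl fun σ _ => ?_
    simp only [hg]
    ring
  -- lower bound on g
  have hg_lb : ∀ σ, -((K:ℝ) + γ * (2 * K)) ≤ g σ := by
    intro σ
    have hpart1 : -(K:ℝ) ≤ ∑ x ∈ μ.1.support, μ.1 x *
        ∑ k, (fmix x.1.1 reward k (Sw k (x.2 k) (deltaPt σ)) - fpure x.1.1 reward k σ) := by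
      have hB : ∀ x : ↥Models × (∀ k, Dev k), -(K:ℝ) ≤
          ∑ k, (fmix x.1.1 reward k (Sw k (x.2 k) (deltaPt σ)) - fpure x.1.1 reward k σ) := by
        intro x
        have h4 : ∀ k : Fin K, (-1:ℝ) ≤
            fmix x.1.1 reward k (Sw k (x.2 k) (deltaPt σ)) - fpure x.1.1 reward k σ := by
          intro k
          have ha := (fmix_mem_Icc (hModels x.1.1 x.1.2) hreward k
            (hSw k (x.2 k) _ (deltaPt_mem σ))).1
          have hb := (fpure_mem_Icc (hModels x.1.1 x.1.2) hreward k σ).2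
          linarith
        calc -(K:ℝ) = ∑ _k : Fin K, (-1:ℝ) := by simp
          _ ≤ _ := Finset.sum_le_sum fun k _ => h4 k
      calc -(K:ℝ) = (∑ x ∈ μ.1.support, μ.1 x) * (-(K:ℝ)) := by
            rw [finDist_suppsum]; ring
        _ = ∑ x ∈ μ.1.support, μ.1 x * (-(K:ℝ)) := Finset.sum_mul _ _ _
        _ ≤ _ := Finset.sum_le_sum fun x _ =>
            mul_le_mul_of_nonneg_left (hB x) (μ.2.1 x)
    have hpart2 : (∑ o, PF Models μ σ o *
        ∑ k, hellSq (postDist Models μ k σ o) (priorDist Models μ k)) ≤ 2 * K := by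
      have hhell : ∀ (k : Fin K) (o : Obs),
          hellSq (postDist Models μ k σ o) (priorDist Models μ k) ≤ 2 := by
        intro k o
        rw [postDist_eq]
        refine hellSq_le_two (fun d => div_nonneg (NumF_nonneg μ hModels k d σ o)
          (PF_nonneg μ hModels σ o)) (fun d => prior_nonneg μ k d) ?_ (le_of_eq (prior_sum μ k))
        rw [← Finset.sum_div, NumF_sum_d]
        by_cases h : PF Models μ σ o = 0
        · rw [h]; norm_num
        · rw [div_self h]
      have h5 : ∀ o : Obs, PF Models μ σ o *
            ∑ k, hellSq (postDist Models μ k σ o) (priorDist Models μ k)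
          ≤ PF Models μ σ o * (2 * K) := by
        intro o
        refine mul_le_mul_of_nonneg_left ?_ (PF_nonneg μ hModels σ o)
        calc ∑ k, hellSq (postDist Models μ k σ o) (priorDist Models μ k)
            ≤ ∑ _k : Fin K, (2:ℝ) := Finset.sum_le_sum fun k _ => hhell k o
          _ = 2 * K := by simp; ring
      calc ∑ o, PF Models μ σ o *
            ∑ k, hellSq (postDist Models μ k σ o) (priorDist Models μ k)
          ≤ ∑ o, PF Models μ σ o * (2 * K) := Finset.sum_le_sum fun o _ => h5 o
        _ = (∑ o, PF Models μ σ o) * (2 * K) := (Finset.sum_mul _ _ _).symm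
        _ = 2 * K := by rw [PF_sum_o μ hModels, one_mul]
    rw [hg]
    dsimp only
    nlinarith
  have hbody_lb : ∀ π : {π : Sig → ℝ // π ∈ stdSimplex ℝ Sig},
      -((K:ℝ) + γ * (2 * K)) ≤ ∑ σ, π.1 σ * g σ := by
    intro π
    calc -((K:ℝ) + γ * (2 * K)) = (∑ σ, π.1 σ) * (-((K:ℝ) + γ * (2 * K))) := by
          rw [π.2.2]; ring
      _ = ∑ σ, π.1 σ * (-((K:ℝ) + γ * (2 * K))) := Finset.sum_mul _ _ _
      _ ≤ ∑ σ, π.1 σ * g σ := Finset.sum_le_sum fun σ _ =>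
          mul_le_mul_of_nonneg_left (hg_lb σ) (π.2.1 σ)
  -- ε-argument
  refine le_of_forall_pos_le_add fun ε hε => ?_
  have hKR : (0:ℝ) < K := Nat.cast_pos.2 hK
  set ε' : ℝ := ε / K with hε'def
  have hε' : 0 < ε' := div_pos hε hKR
  have hPco : PF Models μ ∈ coModels Models := by
    unfold PF
    exact mix_mem_coModels Models _ _ _ (fun y _ => μ.2.1 y) (finDist_suppsum μ)
      (fun y _ => y.1.2)
  have hDdec : (⨅ p : FinDist {π : Sig → ℝ // π ∈ stdSimplex ℝ Sig},
      ⨆ M : coModels Models, Ep γ reward Sw p M.1 (PF Models μ))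
      ≤ decoregCo γ Models reward Sw :=
    D_le_dec hγ.le hreward hModels hSw hNonneg ⟨PF Models μ, hPco⟩
  set D : ℝ := ⨅ p : FinDist {π : Sig → ℝ // π ∈ stdSimplex ℝ Sig},
      ⨆ M : coModels Models, Ep γ reward Sw p M.1 (PF Models μ) with hDdef
  obtain ⟨p, hp⟩ := exists_lt_of_ciInf_lt (show (⨅ p : FinDist {π : Sig → ℝ // π ∈ stdSimplex ℝ Sig},
      ⨆ M : coModels Models, Ep γ reward Sw p M.1 (PF Models μ)) < D + ε' from by
    rw [← hDdef]; exact lt_add_of_pos_right _ hε')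
  -- the mean decision of p
  set πb : Sig → ℝ := fun σ => p.1.sum fun q v => v * q.1 σ with hπbdef
  have hπb : πb ∈ stdSimplex ℝ Sig := by
    constructor
    · intro σ
      exact finDist_weighted_ge p _ 0 fun q _ => q.2.1 σ
    · calc ∑ σ, πb σ = p.1.sum fun q v => v * ∑ σ, q.1 σ :=
          (finDist_sum_swap p univ fun q σ => q.1 σ).symm
        _ = p.1.sum fun q v => v * 1 := by
            rw [finsupp_sum_eq, finsupp_sum_eq]
            exact Finset.sum_congr rfl fun q _ => by rw [q.2.2]
        _ = 1 := finDist_weighted_const p 1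
  refine le_trans (ciInf_le ⟨-((K:ℝ) + γ * (2 * K)), ?_⟩ ⟨πb, hπb⟩) ?_
  · rintro y ⟨π, rfl⟩
    have hlb := hbody_lb π
    rw [← hbody π] at hlb
    exact hlb
  rw [hbody ⟨πb, hπb⟩]
  -- swap expectation over p
  have hswap : ∑ σ, πb σ * g σ = p.1.sum fun q v => v * ∑ σ, q.1 σ * g σ := by
    calc ∑ σ, πb σ * g σ = ∑ σ, p.1.sum fun q v => v * (q.1 σ * g σ) := by
          refine Finset.sum_congr rfl fun σ _ => ?_
          show (p.1.sum fun q v => v * q.1 σ) * g σ = p.1.sum fun q v => v * (q.1 σ * g σ)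
          rw [finsupp_sum_eq, finsupp_sum_eq, Finset.sum_mul]
          exact Finset.sum_congr rfl fun q _ => by ring
      _ = p.1.sum fun q v => v * ∑ σ, q.1 σ * g σ :=
          (finDist_sum_swap p univ fun q σ => q.1 σ * g σ).symm
  rw [hswap]
  -- pointwise core bound
  have hcore : ∀ q : {π : Sig → ℝ // π ∈ stdSimplex ℝ Sig},
      (∑ σ, q.1 σ * g σ) ≤ ∑ k, ∑ d, priorDist Models μ k d *
        (hgap Sw reward (MkdF Models μ M₀ k d) q.1
          - γ * hellSq (obsAt (MkdF Models μ M₀ k d) q.1) (obsAt (PF Models μ) q.1)) := by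
    intro q
    have hexp : ∑ σ, q.1 σ * g σ
        = (∑ σ, q.1 σ * ∑ x ∈ μ.1.support, μ.1 x *
            ∑ k, (fmix x.1.1 reward k (Sw k (x.2 k) (deltaPt σ)) - fpure x.1.1 reward k σ))
          - γ * ∑ σ, q.1 σ * ∑ o, PF Models μ σ o *
              ∑ k, hellSq (postDist Models μ k σ o) (priorDist Models μ k) := by
      rw [Finset.mul_sum, ← Finset.sum_sub_distrib]
      refine Finset.sum_congr rfl fun σ _ => ?_
      rw [hg]
      ring
    have hRHS : (∑ k, ∑ d, priorDist Models μ k d *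
        (hgap Sw reward (MkdF Models μ M₀ k d) q.1
          - γ * hellSq (obsAt (MkdF Models μ M₀ k d) q.1) (obsAt (PF Models μ) q.1)))
        = (∑ k, ∑ d, priorDist Models μ k d * hgap Sw reward (MkdF Models μ M₀ k d) q.1)
          - γ * ∑ k, ∑ d, priorDist Models μ k d *
              hellSq (obsAt (MkdF Models μ M₀ k d) q.1) (obsAt (PF Models μ) q.1) := by
      rw [Finset.mul_sum, ← Finset.sum_sub_distrib]
      refine Finset.sum_congr rfl fun k _ => ?_
      rw [Finset.mul_sum, ← Finset.sum_sub_distrib]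
      exact Finset.sum_congr rfl fun d _ => by ring
    rw [hexp, hRHS]
    have h6 := gain_le hModels hAffine hNonneg hM₀ μ q.1 q.2
    have h7 := info_ge hModels hM₀ μ q.1 q.2
    nlinarith
  calc (p.1.sum fun q v => v * ∑ σ, q.1 σ * g σ)
      ≤ p.1.sum fun q v => v * ∑ k, ∑ d, priorDist Models μ k d *
          (hgap Sw reward (MkdF Models μ M₀ k d) q.1
            - γ * hellSq (obsAt (MkdF Models μ M₀ k d) q.1) (obsAt (PF Models μ) q.1)) :=
        finDist_weighted_mono p _ _ fun q _ => hcore q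
    _ = ∑ k, ∑ d, priorDist Models μ k d * Ep γ reward Sw p (MkdF Models μ M₀ k d)
          (PF Models μ) := by
        rw [finDist_sum_swap p univ]
        refine Finset.sum_congr rfl fun k _ => ?_
        rw [finDist_sum_swap p univ]
        refine Finset.sum_congr rfl fun d _ => ?_
        exact finDist_weighted_smul p _ _
    _ ≤ ∑ k, ∑ d, priorDist Models μ k d * (D + ε') := by
        refine Finset.sum_le_sum fun k _ => Finset.sum_le_sum fun d _ => ?_
        refine mul_le_mul_of_nonneg_left ?_ (prior_nonneg μ k d)
        refine le_of_lt (lt_of_le_of_lt ?_ hp)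
        exact le_ciSup (f := fun M : coModels Models => Ep γ reward Sw p M.1 (PF Models μ))
          (bddAbove_Ep hγ.le hreward hModels hSw p (PF Models μ))
          ⟨MkdF Models μ M₀ k d, MkdF_mem_co μ hModels M₀ hM₀ k d⟩
    _ = K * (D + ε') := by
        have h8 : ∀ k : Fin K, ∑ d, priorDist Models μ k d * (D + ε') = D + ε' := by
          intro k
          rw [← Finset.sum_mul, prior_sum μ k, one_mul]
        rw [Finset.sum_congr rfl fun k _ => h8 k, Finset.sum_const]
        simp [nsmul_eq_mul]
        try ring
    _ ≤ K * decoregCo γ Models reward Sw + ε := by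
        have h9 : (K:ℝ) * ε' = ε := by
          rw [hε'def, mul_div_cancel₀ _ (ne_of_gt hKR)]
        have h10 : (K:ℝ) * D ≤ K * decoregCo γ Models reward Sw :=
          mul_le_mul_of_nonneg_left hDdec (le_of_lt hKR)
        nlinarith [hKR]

end Helpers11

/-- the multi-agent information ratio is bounded by the DEC of the
convex hull: for a `K`-player instance `J` satisfying Assumption 1 (affineness of
the switched value functions) whose convex hull `co(J)` satisfies the
nonnegative-deviation assumption, for every `γ > 0`,
`infr_γ(J) ≤ K · decoreg_γ(co(J))`. -/
theorem infr_le_K_mul_decoregCo (K : ℕ) (hK : 0 < K)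
    (Sigk : Fin K → Type) [∀ k, Fintype (Sigk k)] [∀ k, Nonempty (Sigk k)]
    (Obs : Type) [Fintype Obs] [Nonempty Obs]
    (Dev : Fin K → Type) [∀ k, Fintype (Dev k)] [∀ k, Nonempty (Dev k)]
    (reward : Fin K → Obs → ℝ)
    (hreward : ∀ k o, reward k o ∈ Set.Icc (0 : ℝ) 1)
    (Models : Set ((∀ k, Sigk k) → Obs → ℝ))
    (hModels : ∀ M ∈ Models, ∀ σ, M σ ∈ stdSimplex ℝ Obs)
    (Sw : ∀ k, Dev k → ((∀ k, Sigk k) → ℝ) → ((∀ k, Sigk k) → ℝ))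
    (hSw : ∀ k d π, π ∈ stdSimplex ℝ (∀ k, Sigk k) →
      Sw k d π ∈ stdSimplex ℝ (∀ k, Sigk k))
    -- Assumption 1: `π ↦ f^M_k(Sw_k(dev, π))` is affine on the simplex
    (hAffine : ∀ M ∈ Models, ∀ (k : Fin K) (d : Dev k),
      ∀ π₁ π₂ : (∀ k, Sigk k) → ℝ,
        π₁ ∈ stdSimplex ℝ (∀ k, Sigk k) → π₂ ∈ stdSimplex ℝ (∀ k, Sigk k) →
        ∀ t : ℝ, 0 ≤ t → t ≤ 1 →
          fmix M reward k (Sw k d fun σ => t * π₁ σ + (1 - t) * π₂ σ) =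
            t * fmix M reward k (Sw k d π₁) + (1 - t) * fmix M reward k (Sw k d π₂))
    -- nonnegative-deviation assumption for `co(J)`
    (hNonneg : ∀ Mb ∈ coModels Models, ∀ k : Fin K,
      ∀ π ∈ stdSimplex ℝ (∀ k, Sigk k),
        0 ≤ (⨆ d : Dev k, fmix Mb reward k (Sw k d π)) - fmix Mb reward k π)
    (γ : ℝ) (hγ : 0 < γ) :
    infrVal γ Models reward Sw ≤ K * decoregCo γ Models reward Sw := by
  classical
  by_cases hne : Models.Nonempty
  · haveI : Nonempty (∀ k, Sigk k) := ⟨fun k => Classical.arbitrary _⟩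
    have hdec : 0 ≤ decoregCo γ Models reward Sw :=
      dec_nonneg hγ.le hreward hModels hSw hNonneg hne
    unfold infrVal
    refine Real.iSup_le
      (fun μ => key_mu hK hγ hreward hModels hSw hAffine hNonneg hne μ) ?_
    exact mul_nonneg (Nat.cast_nonneg K) hdec
  · have hME : Models = ∅ := Set.not_nonempty_iff_eq_empty.1 hne
    haveI hE : IsEmpty ↥Models := by rw [hME]; exact Set.isEmpty_coe_sort.2 rfl
    haveI : IsEmpty (↥Models × ∀ k, Dev k) := by infer_instance
    haveI : IsEmpty (FinDist (↥Models × ∀ k, Dev k)) := finDist_isEmpty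
    haveI : IsEmpty ↥(coModels Models) := coModels_isEmpty hne
    unfold infrVal decoregCo
    rw [Real.iSup_of_isEmpty, Real.iSup_of_isEmpty, mul_zero]
end
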